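/- arXiv:1303.4668 — 8 statements merged into one kernel-verified Lean document; each statement's English description precedes it below -/
import Mathlib

section
/- Let T : Ω → ℂ^{n×n} be analytic and regular, let c ∈ ℂ and ρ > 0 be such that the closed disk {z : |z − c| ≤ ρ} is contained in Ω, and suppose T(z) is invertible for every z with |z − c| = ρ. Then (1/(2πi)) · ∮_{|z−c|=ρ} tr(T(z)⁻¹ · T′(z)) dz equals the number of eigenvalues of T in the open disk {z : |z − c| < ρ}, counted with multiplicity, where T′(z) denotes the entrywise complex derivative of T at z and tr denotes the matrix trace. -/
open Set Metric

open scoped Classical in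
/-- Number of zeros of `f` in `U`, counted with multiplicity (order of vanishing). -/
noncomputable def zeroCount (f : ℂ → ℂ) (U : Set ℂ) : ℕ :=
  ∑ᶠ z ∈ U, if h : AnalyticAt ℂ f z then (analyticOrderAt f z).toNat else 0

/-- Number of eigenvalues of the matrix-valued function `T` in `U`, counted with
multiplicity (order of vanishing of `det ∘ T`). -/
noncomputable def evCount {n : ℕ} (T : ℂ → Matrix (Fin n) (Fin n) ℂ) (U : Set ℂ) : ℕ :=
  zeroCount (fun z => (T z).det) U

/-- Entrywise analyticity of a matrix-valued function on a set. -/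
def MatAnalyticOn {n : ℕ} (T : ℂ → Matrix (Fin n) (Fin n) ℂ) (Ω : Set ℂ) : Prop :=
  ∀ i j, ∀ z ∈ Ω, AnalyticAt ℂ (fun w => T w i j) z

/-- Operator norm on `ℂ^{n×n}` induced by the Euclidean norm (spectral norm). -/
noncomputable def l2norm {n : ℕ} (M : Matrix (Fin n) (Fin n) ℂ) : ℝ :=
  ‖Matrix.toEuclideanCLM (𝕜 := ℂ) M‖

/-- Spectral norm of a real matrix. -/
noncomputable def l2normR {n : ℕ} (M : Matrix (Fin n) (Fin n) ℝ) : ℝ :=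
  ‖Matrix.toEuclideanCLM (𝕜 := ℝ) M‖

/-- Euclidean norm of a vector in `ℂⁿ`. -/
noncomputable def e2norm {n : ℕ} (v : Fin n → ℂ) : ℝ :=
  Real.sqrt (∑ k, ‖v k‖ ^ 2)

/-- The `ε`-pseudospectrum of an analytic matrix-valued function on `Ω`. -/
noncomputable def pspec {n : ℕ} (T : ℂ → Matrix (Fin n) (Fin n) ℂ) (Ω : Set ℂ) (ε : ℝ) :
    Set ℂ :=
  {z ∈ Ω | ¬ IsUnit (T z) ∨ ε⁻¹ < l2norm (T z)⁻¹}


section AuxAP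
open Filter Topology

open scoped Classical

noncomputable def ordNat (f : ℂ → ℂ) (z : ℂ) : ℕ :=
  if h : AnalyticAt ℂ f z then (analyticOrderAt f z).toNat else 0

lemma zeroCount_eq (f : ℂ → ℂ) (U : Set ℂ) : zeroCount f U = ∑ᶠ z ∈ U, ordNat f z := rfl

lemma ordNat_of_analytic {f : ℂ → ℂ} {z : ℂ} (h : AnalyticAt ℂ f z) :
    ordNat f z = (analyticOrderAt f z).toNat := dif_pos h

lemma order_eq_zero_iff' {f : ℂ → ℂ} {z : ℂ} (h : AnalyticAt ℂ f z) :
    analyticOrderAt f z = 0 ↔ f z ≠ 0 := by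
  rw [show (0 : ℕ∞) = ((0 : ℕ) : ℕ∞) from rfl, h.analyticOrderAt_eq_natCast]
  constructor
  · rintro ⟨g, hg, hgz, hev⟩
    have h2 := hev.self_of_nhds
    simp only [pow_zero, one_smul] at h2
    rw [h2]; exact hgz
  · intro hz
    exact ⟨f, h, hz, by filter_upwards with w; simp⟩

/-- On a ball where `f` is analytic and not identically zero, all orders are finite. -/
lemma order_ne_top {f : ℂ → ℂ} {c : ℂ} {ρ' : ℝ}
    (hf : ∀ z ∈ ball c ρ', AnalyticAt ℂ f z)
    {z₁ : ℂ} (hz₁ : z₁ ∈ ball c ρ') (hfz₁ : f z₁ ≠ 0)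
    {z : ℂ} (hz : z ∈ ball c ρ') : analyticOrderAt f z ≠ ⊤ := by
  intro htop
  rw [analyticOrderAt_eq_top] at htop
  have hfreq : ∃ᶠ w in 𝓝[≠] z, f w = 0 := (htop.filter_mono nhdsWithin_le_nhds).frequently
  have := AnalyticOnNhd.eqOn_zero_of_preconnected_of_frequently_eq_zero
    (fun w hw => hf w hw) (convex_ball c ρ').isPreconnected hz hfreq hz₁
  exact hfz₁ this

lemma finite_zeros {f : ℂ → ℂ} {c : ℂ} {ρ ρ' : ℝ} (hρρ' : ρ < ρ')
    (hf : ∀ z ∈ ball c ρ', AnalyticAt ℂ f z)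
    {z₁ : ℂ} (hz₁ : z₁ ∈ ball c ρ') (hfz₁ : f z₁ ≠ 0) :
    {z ∈ closedBall c ρ | f z = 0}.Finite := by
  by_contra hinf
  rw [← Set.not_infinite, not_not] at hinf
  obtain ⟨x, hxK, hacc⟩ := hinf.exists_accPt_of_subset_isCompact
    (isCompact_closedBall c ρ) (Set.sep_subset _ _)
  have hxb : x ∈ ball c ρ' := lt_of_le_of_lt (mem_closedBall.mp hxK) hρρ'
  have hne : ∀ᶠ w in 𝓝[≠] x, f w ≠ 0 := by
    rcases (hf x hxb).eventually_eq_zero_or_eventually_ne_zero with h | h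
    · exact absurd (analyticOrderAt_eq_top.mpr h)
        (order_ne_top hf hz₁ hfz₁ hxb)
    · exact h
  rw [eventually_nhdsWithin_iff] at hne
  obtain ⟨U, hU, hUne⟩ := hne.exists_mem
  obtain ⟨y, ⟨hyU, hyZ⟩, hyx⟩ := (accPt_iff_nhds (x := x)).mp hacc U hU
  exact hUne y hyU hyx hyZ.2

lemma analyticAt_deriv {f : ℂ → ℂ} {z : ℂ} (h : AnalyticAt ℂ f z) :
    AnalyticAt ℂ (deriv f) z := by
  have h1 : AnalyticAt ℂ (fun w => (fderiv ℂ f w) 1) z :=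
    ((ContinuousLinearMap.apply ℂ ℂ (1 : ℂ)).analyticAt _).comp h.fderiv
  exact h1

lemma ordNat_ne_zero_imp {f : ℂ → ℂ} {z : ℂ} (h : AnalyticAt ℂ f z)
    (hz : ordNat f z ≠ 0) : f z = 0 := by
  by_contra hfz
  rw [ordNat_of_analytic h] at hz
  rw [(order_eq_zero_iff' h).mpr hfz] at hz
  simp at hz

lemma argument_principle {c : ℂ} {ρ ρ' : ℝ} (hρ : 0 < ρ) (hρρ' : ρ < ρ') :
    ∀ N : ℕ, ∀ f : ℂ → ℂ, (∀ z ∈ ball c ρ', AnalyticAt ℂ f z) →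
      (∀ z ∈ sphere c ρ, f z ≠ 0) → zeroCount f (ball c ρ) = N →
      (∮ z in C(c, ρ), deriv f z / f z) = 2 * Real.pi * Complex.I * N := by
  intro N
  induction N using Nat.strong_induction_on with
  | _ N IH =>
  intro f hf hsp hN
  have hsb : sphere c ρ ⊆ ball c ρ' := fun z hz => by
    rw [mem_ball, mem_sphere.mp hz]; exact hρρ'
  have hbb : ball c ρ ⊆ ball c ρ' := ball_subset_ball hρρ'.le
  have hcb : closedBall c ρ ⊆ ball c ρ' := closedBall_subset_ball hρρ'
  have hzs : (c + ρ : ℂ) ∈ sphere c ρ := by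
    simp [Complex.dist_eq, abs_of_pos hρ]
  have hfzs : f (c + ρ) ≠ 0 := hsp _ hzs
  have hzsb : (c + ρ : ℂ) ∈ ball c ρ' := hsb hzs
  -- finite zero set in the closed ball
  have hZc : {z ∈ closedBall c ρ | f z = 0}.Finite := finite_zeros hρρ' hf hzsb hfzs
  have hZb : {z ∈ ball c ρ | f z = 0}.Finite :=
    hZc.subset (fun z hz => ⟨ball_subset_closedBall hz.1, hz.2⟩)
  have hcount : zeroCount f (ball c ρ) = ∑ z ∈ hZb.toFinset, ordNat f z := by
    rw [zeroCount_eq]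
    refine finsum_mem_eq_sum_of_subset _ (fun z hz => ?_) (fun z hz => ?_)
    · rw [Set.Finite.coe_toFinset]
      exact ⟨hz.1, ordNat_ne_zero_imp (hf z (hbb hz.1)) hz.2⟩
    · rw [Set.Finite.coe_toFinset] at hz
      exact hz.1
  by_cases hzero : ∀ z ∈ ball c ρ, f z ≠ 0
  · -- base case : no zeros
    have hNz : (N : ℂ) = 0 := by
      have : hZb.toFinset = ∅ := by
        ext z; simp only [Set.Finite.mem_toFinset, Finset.notMem_empty, iff_false]
        rintro ⟨hz1, hz2⟩; exact hzero z hz1 hz2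
      rw [← hN, hcount, this, Finset.sum_empty]; norm_num
    rw [hNz, mul_zero]
    have hne : ∀ z ∈ closedBall c ρ, f z ≠ 0 := by
      intro z hz
      rcases (show z ∈ ball c ρ ∪ sphere c ρ by rw [ball_union_sphere]; exact hz) with h | h
      · exact hzero z h
      · exact hsp z h
    refine Complex.circleIntegral_eq_zero_of_differentiable_on_off_countable hρ.le
      Set.countable_empty ?_ ?_
    · intro z hz
      exact ((analyticAt_deriv (hf z (hcb hz))).continuousAt.div
        (hf z (hcb hz)).continuousAt (hne z hz)).continuousWithinAt
    · intro z hz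
      exact ((analyticAt_deriv (hf z (hbb hz.1))).differentiableAt.div
        (hf z (hbb hz.1)).differentiableAt (hne z (ball_subset_closedBall hz.1)))
  · -- inductive case : there is a zero z₀ of order m ≥ 1
    push_neg at hzero
    obtain ⟨z₀, hz₀b, hfz₀⟩ := hzero
    have hz₀b' : z₀ ∈ ball c ρ' := hbb hz₀b
    have hz₀cb : z₀ ∈ closedBall c ρ := ball_subset_closedBall hz₀b
    have hordf : ∀ z (hz : z ∈ ball c ρ'), analyticOrderAt f z ≠ ⊤ :=
      fun z hz => order_ne_top hf hzsb hfzs hz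
    set m : ℕ := (analyticOrderAt f z₀).toNat with hmdef
    have hm : analyticOrderAt f z₀ = (m : ℕ∞) := (ENat.coe_toNat (hordf z₀ hz₀b')).symm
    have hm1 : 1 ≤ m := by
      by_contra hlt
      have h0 : m = 0 := by omega
      rw [h0] at hm
      exact (order_eq_zero_iff' (hf z₀ hz₀b')).mp (by exact_mod_cast hm) hfz₀
    obtain ⟨h, hh, hhz₀, hev⟩ := (hf z₀ hz₀b').analyticOrderAt_eq_natCast.mp hm
    set g : ℂ → ℂ := Function.update (fun z => f z / (z - z₀) ^ m) z₀ (h z₀) with hgdef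
    have hg_off : ∀ z, z ≠ z₀ → g z = f z / (z - z₀) ^ m :=
      fun z hz => Function.update_of_ne hz _ _
    have hg_z₀ : g z₀ = h z₀ := Function.update_self _ _ _
    have hgz₀ne : g z₀ ≠ 0 := hg_z₀ ▸ hhz₀
    have hfg : ∀ z, f z = (z - z₀) ^ m * g z := by
      intro z
      by_cases hz : z = z₀
      · subst hz; rw [hfz₀, sub_self, zero_pow (by omega), zero_mul]
      · rw [hg_off z hz, mul_div_cancel₀]
        exact pow_ne_zero _ (sub_ne_zero.mpr hz)
    have hg_ev : g =ᶠ[nhds z₀] h := by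
      filter_upwards [hev] with w hw
      by_cases hwz : w = z₀
      · subst hwz; exact hg_z₀
      · rw [hg_off w hwz, hw, smul_eq_mul, mul_div_cancel_left₀]
        exact pow_ne_zero _ (sub_ne_zero.mpr hwz)
    have hganal : ∀ z ∈ ball c ρ', AnalyticAt ℂ g z := by
      intro z hz
      by_cases hzz : z = z₀
      · subst hzz; exact hh.congr hg_ev.symm
      · have h1 : AnalyticAt ℂ (fun w => f w / (w - z₀) ^ m) z :=
          (hf z hz).div ((analyticAt_id.sub analyticAt_const).pow m)
            (pow_ne_zero _ (sub_ne_zero.mpr hzz))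
        refine h1.congr ?_
        filter_upwards [eventually_ne_nhds hzz] with w hw
        exact (hg_off w hw).symm
    have hgsp : ∀ z ∈ sphere c ρ, g z ≠ 0 := by
      intro z hz
      have hzz : z ≠ z₀ := by
        intro hzz; rw [hzz] at hz
        exact absurd (mem_sphere.mp hz) (ne_of_lt (mem_ball.mp hz₀b))
      rw [hg_off z hzz]
      exact div_ne_zero (hsp z hz) (pow_ne_zero _ (sub_ne_zero.mpr hzz))
    -- order bookkeeping
    have hordg_z₀ : analyticOrderAt g z₀ = 0 := (order_eq_zero_iff' (hganal z₀ hz₀b')).mpr hgz₀ne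
    have hord_eq : ∀ z (hz : z ∈ ball c ρ'), z ≠ z₀ →
        analyticOrderAt f z = analyticOrderAt g z := by
      intro z hz hzz
      have hgnt : analyticOrderAt g z ≠ ⊤ := by
        intro htop
        apply hordf z hz
        rw [analyticOrderAt_eq_top] at htop ⊢
        filter_upwards [htop] with w hw
        rw [hfg w, hw, mul_zero]
      set k : ℕ := (analyticOrderAt g z).toNat with hkdef
      have hk : analyticOrderAt g z = (k : ℕ∞) := (ENat.coe_toNat hgnt).symm
      obtain ⟨u, hu, huz, huev⟩ := (hganal z hz).analyticOrderAt_eq_natCast.mp hk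
      rw [hk]
      rw [(hf z hz).analyticOrderAt_eq_natCast]
      refine ⟨fun w => (w - z₀) ^ m * u w, ?_, ?_, ?_⟩
      · exact ((analyticAt_id.sub analyticAt_const).pow m).mul hu
      · exact mul_ne_zero (pow_ne_zero _ (sub_ne_zero.mpr hzz)) huz
      · filter_upwards [huev] with w hw
        rw [hfg w, hw]
        simp [smul_eq_mul]; ring
    have hz₀F : z₀ ∈ hZb.toFinset := by
      rw [Set.Finite.mem_toFinset]; exact ⟨hz₀b, hfz₀⟩
    have hcountg : zeroCount g (ball c ρ) = ∑ z ∈ hZb.toFinset, ordNat g z := by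
      rw [zeroCount_eq]
      refine finsum_mem_eq_sum_of_subset _ (fun z hz => ?_) (fun z hz => ?_)
      · rw [Set.Finite.coe_toFinset]
        refine ⟨hz.1, ?_⟩
        have hgz : g z = 0 := ordNat_ne_zero_imp (hganal z (hbb hz.1)) hz.2
        rw [hfg z, hgz, mul_zero]
      · rw [Set.Finite.coe_toFinset] at hz
        exact hz.1
    have herase : ∀ z ∈ hZb.toFinset.erase z₀, ordNat f z = ordNat g z := by
      intro z hz
      have hzz : z ≠ z₀ := (Finset.mem_erase.mp hz).1
      have hzb : z ∈ ball c ρ :=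
        (Set.Finite.mem_toFinset hZb |>.mp (Finset.mem_erase.mp hz).2).1
      rw [ordNat_of_analytic (hf z (hbb hzb)), ordNat_of_analytic (hganal z (hbb hzb)),
        hord_eq z (hbb hzb) hzz]
    have hfz0ord : ordNat f z₀ = m := by
      rw [ordNat_of_analytic (hf z₀ hz₀b'), hm]; simp
    have hgz0ord : ordNat g z₀ = 0 := by
      rw [ordNat_of_analytic (hganal z₀ hz₀b'), hordg_z₀]; simp
    have hsum : ∑ z ∈ hZb.toFinset, ordNat f z = (∑ z ∈ hZb.toFinset, ordNat g z) + m :=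
      calc ∑ z ∈ hZb.toFinset, ordNat f z
          = (∑ z ∈ hZb.toFinset.erase z₀, ordNat f z) + ordNat f z₀ :=
            (Finset.sum_erase_add _ _ hz₀F).symm
        _ = (∑ z ∈ hZb.toFinset.erase z₀, ordNat g z) + m := by
            rw [hfz0ord]; congr 1; exact Finset.sum_congr rfl herase
        _ = ((∑ z ∈ hZb.toFinset.erase z₀, ordNat g z) + ordNat g z₀) + m := by
            rw [hgz0ord, add_zero]
        _ = (∑ z ∈ hZb.toFinset, ordNat g z) + m := by
            rw [Finset.sum_erase_add _ _ hz₀F]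
    have hfg_count : zeroCount f (ball c ρ) = zeroCount g (ball c ρ) + m := by
      rw [hcount, hcountg, hsum]
    have hlt : zeroCount g (ball c ρ) < N := by omega
    have hIH := IH _ hlt g hganal hgsp rfl
    have hInt_eq : Set.EqOn (fun z => deriv f z / f z)
        (fun z => (m : ℂ) * (z - z₀)⁻¹ + deriv g z / g z) (sphere c ρ) := by
      intro z hz
      have hzb' : z ∈ ball c ρ' := hsb hz
      have hzz : z ≠ z₀ := by
        intro hzz; rw [hzz] at hz
        exact absurd (mem_sphere.mp hz) (ne_of_lt (mem_ball.mp hz₀b))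
      have hsub : z - z₀ ≠ 0 := sub_ne_zero.mpr hzz
      have hgz : g z ≠ 0 := hgsp z hz
      have hg' : HasDerivAt g (deriv g z) z := (hganal z hzb').differentiableAt.hasDerivAt
      have hpow : HasDerivAt (fun w => (w - z₀) ^ m) ((m : ℂ) * (z - z₀) ^ (m - 1) * 1) z :=
        ((hasDerivAt_id z).sub_const z₀).pow m
      have hprod := hpow.mul hg'
      have hfeq : f = fun w => (w - z₀) ^ m * g w := funext hfg
      have hderivf : deriv f z
          = (m : ℂ) * (z - z₀) ^ (m - 1) * 1 * g z + (z - z₀) ^ m * deriv g z := by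
        rw [hfeq]; exact hprod.deriv
      show deriv f z / f z = (m : ℂ) * (z - z₀)⁻¹ + deriv g z / g z
      rw [hderivf, hfg z]
      have hpm : (z - z₀) ^ m = (z - z₀) ^ (m - 1) * (z - z₀) := by
        rw [← pow_succ]; congr 1; omega
      rw [hpm]
      field_simp
    rw [circleIntegral.integral_congr hρ.le hInt_eq]
    have hc1 : ContinuousOn (fun z => (m : ℂ) * (z - z₀)⁻¹) (sphere c ρ) := by
      refine continuousOn_const.mul (ContinuousOn.inv₀ (by fun_prop) ?_)
      intro z hz
      refine sub_ne_zero.mpr ?_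
      intro hzz; rw [hzz] at hz
      exact absurd (mem_sphere.mp hz) (ne_of_lt (mem_ball.mp hz₀b))
    have hc2 : ContinuousOn (fun z => deriv g z / g z) (sphere c ρ) := by
      intro z hz
      exact ((analyticAt_deriv (hganal z (hsb hz))).continuousAt.div
        (hganal z (hsb hz)).continuousAt (hgsp z hz)).continuousWithinAt
    have hI1 : CircleIntegrable (fun z => (m : ℂ) * (z - z₀)⁻¹) c ρ :=
      hc1.circleIntegrable hρ.le
    have hI2 : CircleIntegrable (fun z => deriv g z / g z) c ρ :=
      hc2.circleIntegrable hρ.le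
    have hS : CircleIntegrable (fun z => (m : ℂ) * (z - z₀)⁻¹ + deriv g z / g z) c ρ :=
      hI1.add hI2
    have hsub := circleIntegral.integral_sub hS hI1
    simp only [add_sub_cancel_left] at hsub
    rw [eq_sub_iff_add_eq] at hsub
    rw [← hsub]
    rw [circleIntegral.integral_const_mul]
    rw [circleIntegral.integral_sub_inv_of_mem_ball hz₀b]
    rw [hIH, ← hN, hfg_count]
    push_cast
    ring

end AuxAP

section AuxJacobi

variable {n : ℕ}

/-- Linearity of det in one row, expanded over a sum. -/
lemma det_updateRow_finset_sum (A : Matrix (Fin n) (Fin n) ℂ) (k : Fin n)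
    (s : Finset (Fin n)) (w : Fin n → Fin n → ℂ) :
    (A.updateRow k (∑ i ∈ s, w i)).det = ∑ i ∈ s, (A.updateRow k (w i)).det := by
  induction s using Finset.induction_on with
  | empty =>
      simp only [Finset.sum_empty]
      have := Matrix.det_updateRow_smul A k (0 : ℂ) 0
      simpa using this
  | insert _ _ hk ih =>
      rename_i a s'
      rw [Finset.sum_insert hk, Matrix.det_updateRow_add, ih, Finset.sum_insert hk]

lemma sum_det_updateRow_eq_trace (A B : Matrix (Fin n) (Fin n) ℂ) :
    ∑ k, (A.updateRow k (B k)).det = (A.adjugate * B).trace := by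
  have h1 : ∀ (v : Fin n → ℂ) (k : Fin n), (A.updateRow k v).det
      = ∑ i, v i * A.adjugate i k := by
    intro v k
    have hv : v = ∑ i, v i • (Pi.single i (1:ℂ) : Fin n → ℂ) := by
      funext j
      simp [Pi.single_apply, eq_comm]
    conv_lhs => rw [hv]
    rw [det_updateRow_finset_sum A k Finset.univ (fun i => v i • (Pi.single i (1:ℂ) : Fin n → ℂ))]
    refine Finset.sum_congr rfl fun i _ => ?_
    rw [Matrix.det_updateRow_smul, Matrix.adjugate_apply]
  simp only [h1 (B _), Matrix.trace, Matrix.diag, Matrix.mul_apply]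
  rw [Finset.sum_comm]
  exact Finset.sum_congr rfl fun i _ => Finset.sum_congr rfl fun k _ => mul_comm _ _

/-- Jacobi-type formula: derivative of `det ∘ T`. -/
lemma hasDerivAt_det (T : ℂ → Matrix (Fin n) (Fin n) ℂ) (B : Matrix (Fin n) (Fin n) ℂ)
    (z : ℂ) (hT : ∀ i j, HasDerivAt (fun w => T w i j) (B i j) z) :
    HasDerivAt (fun w => (T w).det) (∑ k, ((T z).updateRow k (B k)).det) z := by
  have hdet : (fun w => (T w).det)
      = fun w => ∑ σ : Equiv.Perm (Fin n), (Equiv.Perm.sign σ : ℂ) * ∏ i, T w (σ i) i := by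
    funext w
    rw [Matrix.det_apply]
    refine Finset.sum_congr rfl fun σ _ => ?_
    rw [Units.smul_def, zsmul_eq_mul]
  rw [hdet]
  have key : ∀ σ : Equiv.Perm (Fin n),
      HasDerivAt (fun w => (Equiv.Perm.sign σ : ℂ) * ∏ i, T w (σ i) i)
        ((Equiv.Perm.sign σ : ℂ) * ∑ i, (∏ j ∈ Finset.univ.erase i, T z (σ j) j) * B (σ i) i)
        z := by
    intro σ
    have hp : HasDerivAt (fun w => ∏ i, T w (σ i) i)
        (∑ i, (∏ j ∈ Finset.univ.erase i, T z (σ j) j) • B (σ i) i) z :=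
      HasDerivAt.fun_finsetProd (f := fun i w => T w (σ i) i) (fun i _ => hT (σ i) i)
    simpa [smul_eq_mul] using hp.const_mul ((Equiv.Perm.sign σ : ℂ))
  have := HasDerivAt.fun_sum (fun σ (_ : σ ∈ Finset.univ) => key σ)
  convert this using 1
  · rfl
  · rfl
  -- identity: ∑ k det(updateRow A k (B k)) = ∑ σ ε σ * ∑ i (∏_{j≠i} A (σ j) j) * B (σ i) i
  have expand : ∀ k : Fin n, ((T z).updateRow k (B k)).det
      = ∑ σ : Equiv.Perm (Fin n), (Equiv.Perm.sign σ : ℂ) *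
          (B k (σ.symm k) * ∏ j ∈ Finset.univ.erase (σ.symm k), T z (σ j) j) := by
    intro k
    rw [Matrix.det_apply]
    refine Finset.sum_congr rfl fun σ _ => ?_
    have hprod : ∏ j, (T z).updateRow k (B k) (σ j) j
        = B k (σ.symm k) * ∏ j ∈ Finset.univ.erase (σ.symm k), T z (σ j) j := by
      rw [← Finset.mul_prod_erase Finset.univ _ (Finset.mem_univ (σ.symm k))]
      congr 1
      · rw [Matrix.updateRow_apply, if_pos (by simp)]
      · refine Finset.prod_congr rfl fun j hj => ?_
        rw [Matrix.updateRow_apply, if_neg]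
        intro hσj
        have : j = σ.symm k := by
          apply_fun σ.symm at hσj; simpa using hσj
        exact (Finset.mem_erase.mp hj).1 this
    rw [hprod, Units.smul_def, zsmul_eq_mul]
  simp only [expand]
  rw [Finset.sum_comm]
  refine Finset.sum_congr rfl fun σ _ => ?_
  rw [Finset.mul_sum]
  rw [← Equiv.sum_comp σ.symm (fun i => (Equiv.Perm.sign σ : ℂ) *
      ((∏ j ∈ Finset.univ.erase i, T z (σ j) j) * B (σ i) i))]
  refine Finset.sum_congr rfl fun x _ => ?_
  simp only [Equiv.apply_symm_apply]
  ring

end AuxJacobi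

/-- the winding-number integral `(2πi)⁻¹ ∮ tr(T(z)⁻¹ T'(z)) dz` over the
circle `|z - c| = ρ` counts the eigenvalues of `T` in the open disk, with multiplicity. -/
theorem stmt_1 {n : ℕ} (hn : 0 < n) {Ω : Set ℂ} (hΩo : IsOpen Ω) (hΩc : IsConnected Ω)
    (T : ℂ → Matrix (Fin n) (Fin n) ℂ) (hT : MatAnalyticOn T Ω)
    (hreg : ∃ z ∈ Ω, (T z).det ≠ 0)
    (c : ℂ) (ρ : ℝ) (hρ : 0 < ρ) (hball : closedBall c ρ ⊆ Ω)
    (hinv : ∀ z : ℂ, ‖z - c‖ = ρ → IsUnit (T z)) :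
    (2 * Real.pi * Complex.I)⁻¹ *
        (∮ z in C(c, ρ),
          Matrix.trace ((T z)⁻¹ * Matrix.of fun i j => deriv (fun w => T w i j) z)) =
      (evCount T (ball c ρ) : ℂ) := by
  classical
  set f : ℂ → ℂ := fun z => (T z).det with hfdef
  obtain ⟨δ, hδ, hthick⟩ := (isCompact_closedBall c ρ).exists_thickening_subset_open hΩo hball
  set ρ' : ℝ := δ + ρ with hρ'def
  have hρρ' : ρ < ρ' := by simp [hρ'def]; linarith
  have hballΩ : ball c ρ' ⊆ Ω := by
    have := thickening_closedBall hδ hρ.le c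
    rw [hρ'def, ← this]
    exact hthick
  have hsphΩ : ∀ z ∈ sphere c ρ, z ∈ Ω := fun z hz => hball (sphere_subset_closedBall hz)
  have habs : ∀ z ∈ sphere c ρ, ‖z - c‖ = ρ := by
    intro z hz
    rw [← Complex.dist_eq]
    exact mem_sphere.mp hz
  have hfanal : ∀ z ∈ ball c ρ', AnalyticAt ℂ f z := by
    intro z hz
    have hdet : f = fun w => ∑ σ : Equiv.Perm (Fin n),
        ((Equiv.Perm.sign σ : ℤ) : ℂ) * ∏ i, T w (σ i) i := by
      funext w
      show (T w).det = _
      rw [Matrix.det_apply]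
      refine Finset.sum_congr rfl fun σ _ => ?_
      rw [Units.smul_def, zsmul_eq_mul]
    rw [hdet]
    exact Finset.analyticAt_fun_sum _ (fun σ _ =>
      analyticAt_const.mul (Finset.analyticAt_fun_prod _ (fun i _ => hT (σ i) i z (hballΩ hz))))
  have hsp : ∀ z ∈ sphere c ρ, f z ≠ 0 := by
    intro z hz
    have hunit := hinv z (habs z hz)
    exact isUnit_iff_ne_zero.mp ((Matrix.isUnit_iff_isUnit_det _).mp hunit)
  have hAP := argument_principle hρ hρρ' (zeroCount f (ball c ρ)) f hfanal hsp rfl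
  have hcongr : Set.EqOn
      (fun z => Matrix.trace ((T z)⁻¹ * Matrix.of fun i j => deriv (fun w => T w i j) z))
      (fun z => deriv f z / f z) (sphere c ρ) := by
    intro z hz
    have hzΩ : z ∈ Ω := hsphΩ z hz
    have hunit : IsUnit (T z) := hinv z (habs z hz)
    have hdet0 : (T z).det ≠ 0 := hsp z hz
    have hder : HasDerivAt f
        (∑ k, ((T z).updateRow k ((Matrix.of fun i j => deriv (fun w => T w i j) z) k)).det) z :=
      hasDerivAt_det T (Matrix.of fun i j => deriv (fun w => T w i j) z) z
        (fun i j => (hT i j z hzΩ).differentiableAt.hasDerivAt)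
    have hderiv : deriv f z
        = ∑ k, ((T z).updateRow k ((Matrix.of fun i j => deriv (fun w => T w i j) z) k)).det :=
      hder.deriv
    show Matrix.trace ((T z)⁻¹ * Matrix.of fun i j => deriv (fun w => T w i j) z)
        = deriv f z / f z
    rw [hderiv, sum_det_updateRow_eq_trace, Matrix.inv_def, Matrix.smul_mul, Matrix.trace_smul,
      Ring.inverse_eq_inv, smul_eq_mul]
    show ((T z).det)⁻¹ * _ = _
    rw [inv_mul_eq_div]
  rw [circleIntegral.integral_congr hρ.le hcongr, hAP]
  rw [show evCount T (ball c ρ) = zeroCount f (ball c ρ) from rfl]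
  rw [inv_mul_cancel_left₀ Complex.two_pi_I_ne_zero]
end

section
/- Suppose T(z) = D(z) + E(z), where D, E : Ω → ℂ^{n×n} are analytic and D(z) is diagonal for every z ∈ Ω, and fix α ∈ [0,1]. If λ ∈ Ω satisfies det(T(λ)) = 0, then there exists an index j such that |d_jj(λ)| ≤ r_j(λ)^α · c_j(λ)^{1−α}; that is, every eigenvalue of T lies in the union of the generalized Gershgorin regions G_1^α, …, G_n^α. -/
open Set Metric

/-- Auxiliary: Ostrowski-type Gershgorin bound for a singular matrix
`T = Dmat + Emat` with `Dmat` diagonal. -/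
theorem ostrowski_aux {n : ℕ} (Dmat Emat : Matrix (Fin n) (Fin n) ℂ)
    (hdiag : ∀ i j, i ≠ j → Dmat i j = 0)
    (α : ℝ) (hα : α ∈ Set.Icc (0:ℝ) 1)
    (hdet : (Dmat + Emat).det = 0) :
    ∃ j, ‖Dmat j j‖ ≤
      (∑ k, ‖Emat j k‖) ^ α * (∑ i, ‖Emat i j‖) ^ (1 - α) := by
  classical
  obtain ⟨v, hv0, hTv⟩ := (Matrix.exists_mulVec_eq_zero_iff).2 hdet
  set u : Fin n → ℝ := fun j => ‖v j‖ with hu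
  set a : Fin n → Fin n → ℝ := fun j k => ‖Emat j k‖ with ha
  have hu0 : ∀ j, 0 ≤ u j := fun j => norm_nonneg _
  have ha0 : ∀ j k, 0 ≤ a j k := fun j k => norm_nonneg _
  obtain ⟨j₀, hj₀⟩ : ∃ j, v j ≠ 0 := Function.ne_iff.mp hv0
  have hj₀' : 0 < u j₀ := norm_pos_iff.mpr hj₀
  -- key inequality from the null vector
  have key : ∀ j, ‖Dmat j j‖ * u j ≤ ∑ k, a j k * u k := by
    intro j
    have h2 := congrFun hTv j
    simp only [Matrix.mulVec, dotProduct, Matrix.add_apply, Pi.zero_apply] at h2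
    have h3 : ∑ k, Dmat j k * v k = Dmat j j * v j := by
      rw [Finset.sum_eq_single j]
      · intro k _ hk; rw [hdiag j k (Ne.symm hk), zero_mul]
      · simp
    have h4 : ∑ k, (Dmat j k + Emat j k) * v k
        = ∑ k, Dmat j k * v k + ∑ k, Emat j k * v k := by
      rw [← Finset.sum_add_distrib]; exact Finset.sum_congr rfl fun k _ => by ring
    have h1 : Dmat j j * v j = - ∑ k, Emat j k * v k := by
      rw [h4, h3] at h2; linear_combination h2
    calc ‖Dmat j j‖ * u j = ‖Dmat j j * v j‖ := (norm_mul _ _).symm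
      _ = ‖∑ k, Emat j k * v k‖ := by rw [h1, norm_neg]
      _ ≤ ∑ k, ‖Emat j k * v k‖ := norm_sum_le _ _
      _ = ∑ k, a j k * u k := Finset.sum_congr rfl fun k _ => norm_mul _ _
  by_contra hcon
  push_neg at hcon
  rcases eq_or_lt_of_le hα.2 with hα1 | hα1
  · -- α = 1 : row Gershgorin via maximal coordinate
    obtain ⟨j, -, hjmax⟩ := Finset.exists_max_image Finset.univ u ⟨j₀, Finset.mem_univ j₀⟩
    have hju : 0 < u j := lt_of_lt_of_le hj₀' (hjmax j₀ (Finset.mem_univ j₀))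
    have h5 : ‖Dmat j j‖ * u j ≤ (∑ k, a j k) * u j :=
      (key j).trans <| by
        rw [Finset.sum_mul]
        exact Finset.sum_le_sum fun k _ =>
          mul_le_mul_of_nonneg_left (hjmax k (Finset.mem_univ k)) (ha0 j k)
    have h6 : ‖Dmat j j‖ ≤ ∑ k, a j k := le_of_mul_le_mul_right h5 hju
    have h7 := hcon j
    rw [hα1, Real.rpow_one, sub_self, Real.rpow_zero, mul_one] at h7
    exact absurd h6 (not_le.mpr h7)
  · -- α < 1
    have h1α : 0 < 1 - α := by linarith
    set p : ℝ := (1 - α)⁻¹ with hp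
    have hp0 : 0 < p := inv_pos.mpr h1α
    have hcancel : (1 - α) * p = 1 := by
      rw [hp]; field_simp
    have hp1 : 1 ≤ p := by nlinarith [hα.1]
    -- main claim
    have claim : ∀ j, (∑ i, a i j) * u j ^ p ≤ ∑ k, a j k * u k ^ p ∧
        (0 < u j → (∑ i, a i j) * u j ^ p < ∑ k, a j k * u k ^ p) := by
      intro j
      set r : ℝ := ∑ k, a j k with hr
      set c : ℝ := ∑ i, a i j with hc
      have hr0 : 0 ≤ r := Finset.sum_nonneg fun k _ => ha0 j k
      have hc0 : 0 ≤ c := Finset.sum_nonneg fun i _ => ha0 i j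
      have hRHS0 : 0 ≤ ∑ k, a j k * u k ^ p :=
        Finset.sum_nonneg fun k _ => mul_nonneg (ha0 j k) (Real.rpow_nonneg (hu0 k) p)
      rcases eq_or_lt_of_le (hu0 j) with hj | hj
      · constructor
        · rw [← hj, Real.zero_rpow (by positivity), mul_zero]; exact hRHS0
        · intro h; exact absurd h (by rw [← hj]; exact lt_irrefl 0)
      · have hstrict : c * u j ^ p < ∑ k, a j k * u k ^ p := by
          rcases eq_or_lt_of_le hr0 with hrz | hrz
          · -- r = 0 : all a j k = 0, contradicts hcon j
            exfalso
            have hAZ : ∀ k, a j k = 0 := fun k =>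
              (Finset.sum_eq_zero_iff_of_nonneg (fun k _ => ha0 j k)).mp hrz.symm k
                (Finset.mem_univ k)
            have hsum0 : ∑ k, a j k * u k = 0 :=
              Finset.sum_eq_zero fun k _ => by rw [hAZ k, zero_mul]
            have hd0 : ‖Dmat j j‖ * u j ≤ 0 := by rw [← hsum0]; exact key j
            have hd0' : ‖Dmat j j‖ = 0 := by
              by_contra hne
              have : 0 < ‖Dmat j j‖ * u j :=
                mul_pos ((norm_nonneg _).lt_of_ne (Ne.symm hne)) hj
              linarith
            have h8 := hcon j
            rw [← hr, ← hc, hd0'] at h8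
            have hge : 0 ≤ r ^ α * c ^ (1 - α) :=
              mul_nonneg (Real.rpow_nonneg hr0 α) (Real.rpow_nonneg hc0 (1 - α))
            linarith
          · -- r > 0 : Jensen / Hölder
            have hrne : r ≠ 0 := ne_of_gt hrz
            set w : Fin n → ℝ := fun k => a j k / r with hw
            have hw0 : ∀ k ∈ Finset.univ, (0:ℝ) ≤ w k := fun k _ => div_nonneg (ha0 j k) hr0
            have hw1 : ∑ k, w k = 1 := by
              simp only [hw, ← Finset.sum_div]; rw [← hr, div_self hrne]
            have jensen := Real.rpow_arith_mean_le_arith_mean_rpow Finset.univ w u hw0 hw1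
              (fun k _ => hu0 k) hp1
            have hrsplit : r = r ^ α * r ^ (1 - α) := by
              rw [← Real.rpow_add hrz]; norm_num
            have hrpa : 0 < r ^ α := Real.rpow_pos_of_pos hrz α
            have step1 : r ^ α * c ^ (1 - α) * u j < r * ∑ k, w k * u k := by
              have hx := mul_lt_mul_of_pos_right (hcon j) hj
              have hsum : ∑ k, a j k * u k = r * ∑ k, w k * u k := by
                rw [Finset.mul_sum]
                refine Finset.sum_congr rfl fun k _ => ?_
                simp only [hw]; field_simp
              calc r ^ α * c ^ (1 - α) * u j < ‖Dmat j j‖ * u j := hx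
                _ ≤ ∑ k, a j k * u k := key j
                _ = r * ∑ k, w k * u k := hsum
            have step2 : c ^ (1 - α) * u j < r ^ (1 - α) * ∑ k, w k * u k := by
              have h' : r ^ α * (c ^ (1 - α) * u j)
                  < r ^ α * (r ^ (1 - α) * ∑ k, w k * u k) := by
                calc r ^ α * (c ^ (1 - α) * u j) = r ^ α * c ^ (1 - α) * u j := by ring
                  _ < r * ∑ k, w k * u k := step1
                  _ = r ^ α * (r ^ (1 - α) * ∑ k, w k * u k) := by
                      linear_combination (∑ k, w k * u k) * hrsplit
              exact lt_of_mul_lt_mul_left h' (le_of_lt hrpa)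
            have hS0 : 0 ≤ ∑ k, w k * u k :=
              Finset.sum_nonneg fun k _ => mul_nonneg (hw0 k (Finset.mem_univ k)) (hu0 k)
            have step3 : (c ^ (1 - α) * u j) ^ p < (r ^ (1 - α) * ∑ k, w k * u k) ^ p :=
              Real.rpow_lt_rpow (mul_nonneg (Real.rpow_nonneg hc0 _) (hu0 j)) step2 hp0
            have lhs_eq : (c ^ (1 - α) * u j) ^ p = c * u j ^ p := by
              rw [Real.mul_rpow (Real.rpow_nonneg hc0 _) (hu0 j), ← Real.rpow_mul hc0,
                hcancel, Real.rpow_one]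
            have rhs_eq : (r ^ (1 - α) * ∑ k, w k * u k) ^ p
                = r * (∑ k, w k * u k) ^ p := by
              rw [Real.mul_rpow (Real.rpow_nonneg hr0 _) hS0, ← Real.rpow_mul hr0,
                hcancel, Real.rpow_one]
            have hsum2 : r * ∑ k, w k * u k ^ p = ∑ k, a j k * u k ^ p := by
              rw [Finset.mul_sum]
              refine Finset.sum_congr rfl fun k _ => ?_
              simp only [hw]; field_simp
            calc c * u j ^ p = (c ^ (1 - α) * u j) ^ p := lhs_eq.symm
              _ < (r ^ (1 - α) * ∑ k, w k * u k) ^ p := step3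
              _ = r * (∑ k, w k * u k) ^ p := rhs_eq
              _ ≤ r * ∑ k, w k * u k ^ p := mul_le_mul_of_nonneg_left jensen hr0
              _ = ∑ k, a j k * u k ^ p := hsum2
        exact ⟨le_of_lt hstrict, fun _ => hstrict⟩
    -- sum up and contradict
    have hlt : ∑ j, (∑ i, a i j) * u j ^ p < ∑ j, ∑ k, a j k * u k ^ p :=
      Finset.sum_lt_sum (fun j _ => (claim j).1) ⟨j₀, Finset.mem_univ j₀, (claim j₀).2 hj₀'⟩
    have heq : ∑ j, ∑ k, a j k * u k ^ p = ∑ k, (∑ i, a i k) * u k ^ p := by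
      rw [Finset.sum_comm]
      exact Finset.sum_congr rfl fun k _ => by rw [Finset.sum_mul]
    rw [heq] at hlt
    exact lt_irrefl _ hlt

/-- generalized Gershgorin theorem. Every eigenvalue of `T = D + E` lies in
one of the regions `G_j^α = {z ∈ Ω : |d_jj(z)| ≤ r_j(z)^α c_j(z)^(1-α)}`. -/
theorem stmt_2 {n : ℕ} (hn : 0 < n) {Ω : Set ℂ} (hΩo : IsOpen Ω) (hΩc : IsConnected Ω)
    (D E : ℂ → Matrix (Fin n) (Fin n) ℂ)
    (hD : MatAnalyticOn D Ω) (hE : MatAnalyticOn E Ω)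
    (hdiag : ∀ z ∈ Ω, ∀ i j, i ≠ j → D z i j = 0)
    (α : ℝ) (hα : α ∈ Icc (0:ℝ) 1)
    (lam : ℂ) (hlam : lam ∈ Ω) (hdet : (D lam + E lam).det = 0) :
    ∃ j, ‖D lam j j‖ ≤
      (∑ k, ‖E lam j k‖) ^ α * (∑ i, ‖E lam i j‖) ^ (1 - α) := by
  exact ostrowski_aux (D lam) (E lam) (fun i j h => hdiag lam hlam i j h) α hα hdet
end

section
/- Suppose T(z) = D(z) + E(z), where D, E : Ω → ℂ^{n×n} are analytic and D(z) is diagonal for every z ∈ Ω, fix α ∈ [0,1] and an index j, and suppose the diagonal entry d_jj does not vanish identically on Ω. If K is the closure of a bounded connected component of the generalized Gershgorin region G_j^α and K ⊆ Ω, then there exists a point z ∈ K with d_jj(z) = 0. -/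
open Set Metric

section AuxLemmas

open Filter Topology

private lemma aux_clopen {X : Type} [TopologicalSpace X] [CompactSpace X] [T2Space X]
    (x : X) {V : Set X} (hV : IsOpen V) (h : connectedComponent x ⊆ V) :
    ∃ A : Set X, IsClopen A ∧ connectedComponent x ⊆ A ∧ A ⊆ V := by
  have hcl : IsCompact Vᶜ := hV.isClosed_compl.isCompact
  have hdis : (Vᶜ ∩ ⋂ s : { s : Set X // IsClopen s ∧ x ∈ s }, (s : Set X)) = ∅ := by
    rw [← connectedComponent_eq_iInter_isClopen]
    exact Set.eq_empty_of_subset_empty fun y hy => hy.1 (h hy.2)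
  obtain ⟨u, hu⟩ := hcl.elim_finite_subfamily_closed _ (fun s => s.2.1.isClosed) hdis
  refine ⟨⋂ s ∈ u, (s : Set X), isClopen_biInter_finset (fun s _ => s.2.1), ?_, ?_⟩
  · exact Set.subset_iInter₂ fun s _ => s.2.1.connectedComponent_subset s.2.2
  · intro y hy
    by_contra hyV
    exact (Set.eq_empty_iff_forall_notMem.mp hu y) ⟨hyV, hy⟩

private lemma aux_sep {X V : Set ℂ} (hXc : IsCompact X) {x : ℂ} (hx : x ∈ X)
    (hV : IsOpen V) (hUV : connectedComponentIn X x ⊆ V) :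
    ∃ W : Set ℂ, IsOpen W ∧ connectedComponentIn X x ⊆ W ∧ closure W ⊆ V ∧
      Bornology.IsBounded W ∧ ∀ y ∈ closure W, y ∉ W → y ∉ X := by
  haveI : CompactSpace X := isCompact_iff_compactSpace.mp hXc
  set x' : X := ⟨x, hx⟩
  have himg : connectedComponentIn X x = (↑) '' connectedComponent x' :=
    connectedComponentIn_eq_image hx
  have hccV : connectedComponent x' ⊆ ((↑) : X → ℂ) ⁻¹' V := fun y hy =>
    hUV (himg ▸ Set.mem_image_of_mem _ hy)
  obtain ⟨A', hA'clopen, hccA', hA'V⟩ := aux_clopen x' (hV.preimage continuous_subtype_val) hccV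
  set A : Set ℂ := (↑) '' A' with hA
  have hAc : IsCompact A := hA'clopen.isClosed.isCompact.image continuous_subtype_val
  set B : Set ℂ := (↑) '' A'ᶜ with hB
  have hBc : IsCompact B := hA'clopen.compl.isClosed.isCompact.image continuous_subtype_val
  have hAV : A ⊆ V := by rintro _ ⟨a, ha, rfl⟩; exact hA'V ha
  have hO : IsOpen (V ∩ Bᶜ) := hV.inter hBc.isClosed.isOpen_compl
  have hAO : A ⊆ V ∩ Bᶜ := by
    rintro _ ⟨a, ha, rfl⟩
    refine ⟨hA'V ha, ?_⟩
    rintro ⟨b, hb, hba⟩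
    exact hb (by rw [Subtype.coe_injective hba]; exact ha)
  obtain ⟨ρ, hρ, hρsub⟩ := hAc.exists_cthickening_subset_open hO hAO
  have hUA : connectedComponentIn X x ⊆ A := by rw [himg]; exact Set.image_mono hccA'
  have hclW : closure (Metric.thickening ρ A) ⊆ V ∩ Bᶜ :=
    (Metric.closure_thickening_subset_cthickening ρ A).trans hρsub
  refine ⟨Metric.thickening ρ A, Metric.isOpen_thickening,
    hUA.trans (Metric.self_subset_thickening hρ A), hclW.trans Set.inter_subset_left,
    hAc.isBounded.cthickening.subset (Metric.thickening_subset_cthickening ρ A), ?_⟩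
  intro y hyc hyW hyX
  have hyB : y ∉ B := (hclW hyc).2
  rcases Classical.em (⟨y, hyX⟩ ∈ A') with hyA' | hyA'
  · exact hyW (Metric.self_subset_thickening hρ A ⟨⟨y, hyX⟩, hyA', rfl⟩)
  · exact hyB ⟨⟨y, hyX⟩, hyA', rfl⟩

private lemma aux_peak {m : ℕ} {β : ℝ} (hβ : 0 ≤ β) (e : ℂ → Fin m → ℂ) (z1 : ℂ)
    (he : ∀ k, AnalyticAt ℂ (fun w => e w k) z1)
    (hpos : β ≠ 0 → 0 < ∑ k, ‖e z1 k‖) :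
    ∃ f : ℂ → ℂ, AnalyticAt ℂ f z1 ∧ f z1 ≠ 0 ∧
      ‖f z1‖ ^ β = (∑ k, ‖e z1 k‖) ^ β ∧
      ∀ z, ‖f z‖ ^ β ≤ (∑ k, ‖e z k‖) ^ β := by
  by_cases hβ0 : β = 0
  · subst hβ0
    exact ⟨fun _ => 1, analyticAt_const, one_ne_zero, by simp [Real.rpow_zero],
      fun z => by simp [Real.rpow_zero]⟩
  · have hspos := hpos hβ0
    set θ : Fin m → ℂ := fun k => if e z1 k = 0 then 1 else (‖e z1 k‖ : ℂ) / e z1 k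
      with hθ
    have hθabs : ∀ k, ‖θ k‖ = 1 := by
      intro k
      rw [hθ]
      by_cases h : e z1 k = 0
      · simp [h]
      · simp only [h, if_false, norm_div, Complex.norm_real, Real.norm_eq_abs,
          abs_of_nonneg (norm_nonneg _)]
        exact div_self (norm_ne_zero_iff.mpr h)
    have hval : ∀ k, θ k * e z1 k = (‖e z1 k‖ : ℂ) := by
      intro k
      rw [hθ]
      by_cases h : e z1 k = 0
      · simp [h]
      · simp only [h, if_false]
        field_simp
    refine ⟨fun z => ∑ k, θ k * e z k, ?_, ?_, ?_, ?_⟩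
    · exact Finset.analyticAt_fun_sum _ fun k _ => analyticAt_const.mul (he k)
    · have : (∑ k, θ k * e z1 k) = ((∑ k, ‖e z1 k‖ : ℝ) : ℂ) := by
        push_cast
        exact Finset.sum_congr rfl fun k _ => hval k
      show (∑ k, θ k * e z1 k) ≠ 0
      rw [this]
      exact_mod_cast Complex.ofReal_ne_zero.mpr hspos.ne'
    · have h1 : (∑ k, θ k * e z1 k) = ((∑ k, ‖e z1 k‖ : ℝ) : ℂ) := by
        push_cast
        exact Finset.sum_congr rfl fun k _ => hval k
      show ‖∑ k, θ k * e z1 k‖ ^ β = _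
      rw [h1, Complex.norm_real, Real.norm_eq_abs, abs_of_nonneg hspos.le]
    · intro z
      have hle : ‖∑ k, θ k * e z k‖ ≤ ∑ k, ‖e z k‖ := by
        refine (norm_sum_le _ _).trans (le_of_eq ?_)
        exact Finset.sum_congr rfl fun k _ => by rw [norm_mul, hθabs k, one_mul]
      exact Real.rpow_le_rpow (norm_nonneg _) hle hβ

private lemma aux_local (α : ℝ)
    {d f g : ℂ → ℂ} {r c : ℂ → ℝ} {z1 : ℂ} {M : ℝ} (hM : 0 < M)
    (hd : AnalyticAt ℂ d z1) (hd1 : d z1 ≠ 0)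
    (hf : AnalyticAt ℂ f z1) (hf1 : f z1 ≠ 0)
    (hg : AnalyticAt ℂ g z1) (hg1 : g z1 ≠ 0)
    (hfr : ∀ z, ‖f z‖ ^ α ≤ r z ^ α)
    (hgc : ∀ z, ‖g z‖ ^ (1 - α) ≤ c z ^ (1 - α))
    (hfr1 : ‖f z1‖ ^ α = r z1 ^ α)
    (hgc1 : ‖g z1‖ ^ (1 - α) = c z1 ^ (1 - α))
    (hP1 : r z1 ^ α * c z1 ^ (1 - α) = M * ‖d z1‖)
    (hbound : ∀ᶠ z in 𝓝 z1, r z ^ α * c z ^ (1 - α) ≤ M * ‖d z‖) :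
    ∀ᶠ z in 𝓝 z1, r z ^ α * c z ^ (1 - α) = M * ‖d z‖ := by
  have hq1 : 0 < ‖d z1‖ := norm_pos_iff.mpr hd1
  have hPpos : 0 < r z1 ^ α * c z1 ^ (1 - α) := hP1 ▸ mul_pos hM hq1
  have hr1p : 0 < r z1 ^ α := by
    rcases (hfr1 ▸ Real.rpow_nonneg (norm_nonneg (f z1)) α).lt_or_eq with h | h
    · exact h
    · rw [← h, zero_mul] at hPpos; exact absurd hPpos (lt_irrefl 0)
  have hc1p : 0 < c z1 ^ (1 - α) := by
    rcases (hgc1 ▸ Real.rpow_nonneg (norm_nonneg (g z1)) (1 - α)).lt_or_eq with h | h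
    · exact h
    · rw [← h, mul_zero] at hPpos; exact absurd hPpos (lt_irrefl 0)
  set ψ : ℂ → ℂ := fun z => Complex.exp ((α : ℂ) * Complex.log (f z / f z1)
    + ((1 - α : ℝ) : ℂ) * Complex.log (g z / g z1) - Complex.log (d z / d z1)) with hψ
  have hψa : AnalyticAt ℂ ψ z1 := by
    refine AnalyticAt.cexp ?_
    refine AnalyticAt.sub (AnalyticAt.add ?_ ?_) ?_
    · exact analyticAt_const.mul ((hf.div analyticAt_const hf1).clog (by simp [div_self hf1]))
    · exact analyticAt_const.mul ((hg.div analyticAt_const hg1).clog (by simp [div_self hg1]))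
    · exact (hd.div analyticAt_const hd1).clog (by simp [div_self hd1])
  have expp : ∀ t : ℝ, 0 < t → ∀ s : ℝ, Real.exp (s * Real.log t) = t ^ s := fun t ht s => by
    rw [Real.rpow_def_of_pos ht, mul_comm]
  have habs : ∀ z, f z ≠ 0 → g z ≠ 0 → d z ≠ 0 →
      ‖ψ z‖ = (‖f z‖ ^ α * ‖g z‖ ^ (1 - α)
        * ‖d z1‖) / (‖d z‖ * (r z1 ^ α * c z1 ^ (1 - α))) := by
    intro z hfz hgz hdz
    have h1 : ‖ψ z‖ = Real.exp (α * Real.log (‖f z / f z1‖)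
        + (1 - α) * Real.log (‖g z / g z1‖)
        - Real.log (‖d z / d z1‖)) := by
      rw [hψ, Complex.norm_exp]
      congr 1
      simp [Complex.add_re, Complex.sub_re, Complex.re_ofReal_mul, Complex.log_re]
    have hfzp : 0 < ‖f z / f z1‖ := norm_pos_iff.mpr (div_ne_zero hfz hf1)
    have hgzp : 0 < ‖g z / g z1‖ := norm_pos_iff.mpr (div_ne_zero hgz hg1)
    have hdzp : 0 < ‖d z / d z1‖ := norm_pos_iff.mpr (div_ne_zero hdz hd1)
    rw [h1, Real.exp_sub, Real.exp_add, expp _ hfzp α, expp _ hgzp (1 - α),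
      Real.exp_log hdzp, norm_div, norm_div, norm_div,
      Real.div_rpow (norm_nonneg _) (norm_nonneg _),
      Real.div_rpow (norm_nonneg _) (norm_nonneg _), hfr1, hgc1]
    have h2 : ‖d z‖ ≠ 0 := norm_ne_zero_iff.mpr hdz
    field_simp
  have hψ1 : ‖ψ z1‖ = 1 := by
    rw [habs z1 hf1 hg1 hd1, hfr1, hgc1, div_eq_one_iff_eq (mul_pos hq1 hPpos).ne']
    ring
  have hev : ∀ᶠ z in 𝓝 z1, f z ≠ 0 ∧ g z ≠ 0 ∧ d z ≠ 0 ∧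
      r z ^ α * c z ^ (1 - α) ≤ M * ‖d z‖ := by
    filter_upwards [hf.continuousAt.eventually_ne hf1, hg.continuousAt.eventually_ne hg1,
      hd.continuousAt.eventually_ne hd1, hbound] with z h1 h2 h3 h4
    exact ⟨h1, h2, h3, h4⟩
  have hle1 : ∀ᶠ z in 𝓝 z1, ‖ψ z‖ ≤ 1 := by
    filter_upwards [hev] with z hz
    obtain ⟨h1, h2, h3, h4⟩ := hz
    rw [habs z h1 h2 h3, div_le_one (mul_pos (norm_pos_iff.mpr h3) hPpos)]
    calc ‖f z‖ ^ α * ‖g z‖ ^ (1 - α) * ‖d z1‖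
        ≤ (r z ^ α * c z ^ (1 - α)) * ‖d z1‖ :=
          mul_le_mul_of_nonneg_right
            (mul_le_mul (hfr z) (hgc z) (Real.rpow_nonneg (norm_nonneg _) _)
              ((Real.rpow_nonneg (norm_nonneg (f z)) α).trans (hfr z))) hq1.le
      _ ≤ M * ‖d z‖ * ‖d z1‖ :=
          mul_le_mul_of_nonneg_right h4 hq1.le
      _ = ‖d z‖ * (r z1 ^ α * c z1 ^ (1 - α)) := by rw [hP1]; ring
  have hmax : IsLocalMax (norm ∘ ψ) z1 := by
    filter_upwards [hle1] with z hz
    simp only [Function.comp_apply, hψ1]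
    exact hz
  have heq := Complex.eventually_eq_of_isLocalMax_norm
    (hψa.eventually_analyticAt.mono fun z hz => hz.differentiableAt) hmax
  filter_upwards [heq, hev] with z hz hz2
  obtain ⟨h1, h2, h3, h4⟩ := hz2
  have habz : ‖ψ z‖ = 1 := by rw [hz, hψ1]
  rw [habs z h1 h2 h3, div_eq_one_iff_eq (mul_pos (norm_pos_iff.mpr h3) hPpos).ne'] at habz
  rw [hP1] at habz
  have h5 : ‖f z‖ ^ α * ‖g z‖ ^ (1 - α) = ‖d z‖ * M :=
    mul_right_cancel₀ hq1.ne' (by rw [habz]; ring)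
  refine le_antisymm h4 ?_
  calc M * ‖d z‖ = ‖f z‖ ^ α * ‖g z‖ ^ (1 - α) := by
        rw [h5]; ring
    _ ≤ r z ^ α * c z ^ (1 - α) :=
        mul_le_mul (hfr z) (hgc z) (Real.rpow_nonneg (norm_nonneg _) _)
          ((Real.rpow_nonneg (norm_nonneg (f z)) α).trans (hfr z))

end AuxLemmas

set_option maxHeartbeats 1000000 in
open Filter Topology in
/-- if `K` is the closure of a bounded connected component of the
generalized Gershgorin region `G_j^α` and `K ⊆ Ω`, then the diagonal entry `d_jj`
has a zero in `K`. -/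
theorem stmt_4 {n : ℕ} (hn : 0 < n) {Ω : Set ℂ} (hΩo : IsOpen Ω) (hΩc : IsConnected Ω)
    (D E : ℂ → Matrix (Fin n) (Fin n) ℂ)
    (hD : MatAnalyticOn D Ω) (hE : MatAnalyticOn E Ω)
    (hdiag : ∀ z ∈ Ω, ∀ i j, i ≠ j → D z i j = 0)
    (α : ℝ) (hα : α ∈ Icc (0:ℝ) 1) (j : Fin n)
    (hdjj : ∃ z ∈ Ω, D z j j ≠ 0)
    (Gj : Set ℂ)
    (hGj : Gj = {z ∈ Ω | ‖D z j j‖ ≤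
      (∑ k, ‖E z j k‖) ^ α * (∑ i, ‖E z i j‖) ^ (1 - α)})
    {U : Set ℂ} (hUcc : ∃ x ∈ Gj, U = connectedComponentIn Gj x)
    (hUb : Bornology.IsBounded U)
    (K : Set ℂ) (hK : K = closure U) (hKΩ : K ⊆ Ω) :
    ∃ z ∈ K, D z j j = 0 := by
  classical
  obtain ⟨x, hxG, hUdef⟩ := hUcc
  by_contra hcon
  push_neg at hcon
  subst hGj hK
  -- abbreviations
  set q : ℂ → ℝ := fun z => ‖D z j j‖ with hq_def
  set P : ℂ → ℝ := fun z =>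
    (∑ k, ‖E z j k‖) ^ α * (∑ i, ‖E z i j‖) ^ (1 - α) with hP_def
  set Gset : Set ℂ := {z | z ∈ Ω ∧ q z ≤ P z} with hGset_def
  have hxG' : x ∈ Gset := hxG
  have hUdef' : U = connectedComponentIn Gset x := hUdef
  -- continuity
  have hdc : ∀ z ∈ Ω, ContinuousAt (fun w => D w j j) z := fun z hz => (hD j j z hz).continuousAt
  have hqc : ∀ z ∈ Ω, ContinuousAt q z := fun z hz =>
    continuous_norm.continuousAt.comp (hdc z hz)
  have hrc : ∀ z ∈ Ω, ContinuousAt (fun w => ∑ k, ‖E w j k‖) z := fun z hz =>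
    tendsto_finset_sum _ fun k _ =>
      continuous_norm.continuousAt.comp (hE j k z hz).continuousAt
  have hcc : ∀ z ∈ Ω, ContinuousAt (fun w => ∑ i, ‖E w i j‖) z := fun z hz =>
    tendsto_finset_sum _ fun i _ =>
      continuous_norm.continuousAt.comp (hE i j z hz).continuousAt
  have hPc : ∀ z ∈ Ω, ContinuousAt P z := fun z hz =>
    ((hrc z hz).rpow_const (Or.inr hα.1)).mul
      ((hcc z hz).rpow_const (Or.inr (by linarith [hα.2])))
  -- relative closedness of the Gershgorin set
  have hGclosed : ∀ S, S ⊆ Gset → ∀ z ∈ Ω, z ∈ closure S → z ∈ Gset := by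
    intro S hS z hz hzc
    haveI := mem_closure_iff_nhdsWithin_neBot.mp hzc
    refine ⟨hz, le_of_tendsto_of_tendsto (b := 𝓝[S] z)
      ((hqc z hz).tendsto.mono_left nhdsWithin_le_nhds)
      ((hPc z hz).tendsto.mono_left nhdsWithin_le_nhds) ?_⟩
    filter_upwards [eventually_mem_nhdsWithin] with w hw
    exact (hS hw).2
  -- K = U : the component is compact
  have hxU : x ∈ U := hUdef' ▸ mem_connectedComponentIn hxG'
  have hUG : U ⊆ Gset := hUdef' ▸ connectedComponentIn_subset _ _
  have hUpre : IsPreconnected U := hUdef' ▸ isPreconnected_connectedComponentIn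
  have hKU : closure U = U := by
    refine Subset.antisymm ?_ subset_closure
    have hsub : closure U ⊆ Gset := fun z hz => hGclosed U hUG z (hKΩ hz) hz
    have h2 := hUpre.closure.subset_connectedComponentIn (subset_closure hxU) hsub
    rwa [← hUdef'] at h2
  have hUcl : IsClosed U := by rw [← hKU]; exact isClosed_closure
  have hUcomp : IsCompact U := isCompact_of_isClosed_isBounded hUcl hUb
  have hUΩ : U ⊆ Ω := fun z hz => hKΩ (subset_closure hz)
  -- a compact neighborhood C of U inside Ω
  obtain ⟨δ, hδpos, hδ⟩ := hUcomp.exists_cthickening_subset_open hΩo hUΩ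
  set C : Set ℂ := cthickening δ U with hC
  have hCcomp : IsCompact C := hUcomp.cthickening
  have hCΩ : C ⊆ Ω := hδ
  have hUintC : U ⊆ interior C :=
    (Metric.self_subset_thickening hδpos U).trans (Metric.thickening_subset_interior_cthickening δ U)
  -- the compact set X = Gset ∩ C
  set X : Set ℂ := Gset ∩ C with hX
  have hXG : X ⊆ Gset := inter_subset_left
  have hXcl : IsClosed X := by
    refine isClosed_of_closure_subset fun z hz => ?_
    have hzC : z ∈ C := hCcomp.isClosed.closure_subset (closure_mono inter_subset_right hz)
    exact ⟨hGclosed X hXG z (hCΩ hzC) hz, hzC⟩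
  have hXcomp : IsCompact X := hCcomp.of_isClosed_subset hXcl inter_subset_right
  have hxX : x ∈ X := ⟨hxG', interior_subset (hUintC hxU)⟩
  have hUX : U = connectedComponentIn X x := by
    refine Subset.antisymm ?_ ?_
    · exact hUpre.subset_connectedComponentIn hxU
        (subset_inter hUG (hUintC.trans interior_subset))
    · rw [hUdef']
      exact connectedComponentIn_mono x inter_subset_left
  -- the open set V around U
  have hdne : IsOpen {z | z ∈ Ω ∧ D z j j ≠ 0} := by
    have hco : ContinuousOn (fun w => D w j j) Ω := fun z hz => (hdc z hz).continuousWithinAt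
    exact hco.isOpen_inter_preimage hΩo isOpen_compl_singleton
  set V : Set ℂ := interior C ∩ {z | z ∈ Ω ∧ D z j j ≠ 0} with hV
  have hVopen : IsOpen V := isOpen_interior.inter hdne
  have hUV : U ⊆ V := fun z hz => ⟨hUintC hz, hUΩ hz, hcon z (subset_closure hz)⟩
  -- separation: an open W around U whose frontier avoids the Gershgorin set
  obtain ⟨W, hWopen, hUW', hclWV, hWb, hfrontier⟩ :=
    aux_sep hXcomp hxX hVopen (by rw [← hUX]; exact hUV)
  have hUW : U ⊆ W := by rw [hUX]; exact hUW'
  have hWΩ : closure W ⊆ Ω := fun z hz => (hclWV hz).2.1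
  have hWd : ∀ z ∈ closure W, D z j j ≠ 0 := fun z hz => (hclWV hz).2.2
  have hWC : closure W ⊆ C := fun z hz => interior_subset (hclWV hz).1
  have hWcomp : IsCompact (closure W) := isCompact_of_isClosed_isBounded isClosed_closure hWb.closure
  have hqpos : ∀ z ∈ closure W, 0 < q z := fun z hz => norm_pos_iff.mpr (hWd z hz)
  -- maximize F = P/q on closure W
  set F : ℂ → ℝ := fun z => P z / q z with hF_def
  have hFc : ContinuousOn F (closure W) := fun z hz =>
    (((hPc z (hWΩ hz)).div (hqc z (hWΩ hz)) (hqpos z hz).ne')).continuousWithinAt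
  have hxW : x ∈ closure W := subset_closure (hUW hxU)
  obtain ⟨z0, hz0mem, hz0max⟩ := hWcomp.exists_isMaxOn ⟨x, hxW⟩ hFc
  set M : ℝ := F z0 with hM_def
  have hM1 : 1 ≤ M := le_trans ((one_le_div (hqpos x hxW)).mpr hxG'.2) (hz0max hxW)
  have hMpos : 0 < M := lt_of_lt_of_le one_pos hM1
  have hfrW : ∀ y ∈ closure W, y ∉ W → F y < 1 := by
    intro y hy hyW
    have hyG : y ∉ Gset := fun hG => hfrontier y hy hyW ⟨hG, hWC hy⟩
    have hlt : P y < q y := lt_of_not_ge fun hle => hyG ⟨hWΩ hy, hle⟩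
    exact (div_lt_one (hqpos y hy)).mpr hlt
  have hz0W : z0 ∈ W := by
    by_contra hz0W
    exact absurd (hfrW z0 hz0mem hz0W) (not_lt.mpr hM1)
  -- key local constancy claim
  have key : ∀ z1 ∈ W, F z1 = M → ∀ᶠ z in 𝓝 z1, z ∈ W ∧ F z = M := by
    intro z1 hz1W hFz1
    have hz1cl : z1 ∈ closure W := subset_closure hz1W
    have hz1Ω : z1 ∈ Ω := hWΩ hz1cl
    have hd1 : D z1 j j ≠ 0 := hWd z1 hz1cl
    have hq1 : 0 < q z1 := hqpos z1 hz1cl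
    have hP1 : P z1 = M * q z1 := by
      simp only [hF_def] at hFz1
      exact (div_eq_iff hq1.ne').mp hFz1
    have hP1pos : 0 < P z1 := by rw [hP1]; exact mul_pos hMpos hq1
    have hr1 : α ≠ 0 → 0 < ∑ k, ‖E z1 j k‖ := by
      intro hα0
      rcases (Finset.sum_nonneg fun k _ => norm_nonneg (E z1 j k)).lt_or_eq with h | h
      · exact h
      · exfalso
        have : P z1 = 0 := by simp only [hP_def]; rw [← h, Real.zero_rpow hα0, zero_mul]
        rw [this] at hP1pos; exact lt_irrefl 0 hP1pos
    have hc1 : (1 - α) ≠ 0 → 0 < ∑ i, ‖E z1 i j‖ := by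
      intro hα1
      rcases (Finset.sum_nonneg fun i _ => norm_nonneg (E z1 i j)).lt_or_eq with h | h
      · exact h
      · exfalso
        have : P z1 = 0 := by simp only [hP_def]; rw [← h, Real.zero_rpow hα1, mul_zero]
        rw [this] at hP1pos; exact lt_irrefl 0 hP1pos
    obtain ⟨f, hfa, hf1, hfeq, hfle⟩ :=
      aux_peak hα.1 (fun w k => E w j k) z1 (fun k => hE j k z1 hz1Ω) hr1
    obtain ⟨g, hga, hg1, hgeq, hgle⟩ :=
      aux_peak (by linarith [hα.2] : (0:ℝ) ≤ 1 - α) (fun w i => E w i j) z1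
        (fun i => hE i j z1 hz1Ω) hc1
    have hbound : ∀ᶠ z in 𝓝 z1,
        (∑ k, ‖E z j k‖) ^ α * (∑ i, ‖E z i j‖) ^ (1 - α)
          ≤ M * ‖D z j j‖ := by
      filter_upwards [hWopen.mem_nhds hz1W] with z hz
      have h1 : F z ≤ M := hz0max (subset_closure hz)
      simp only [hF_def] at h1
      exact (div_le_iff₀ (hqpos z (subset_closure hz))).mp h1
    have hres := aux_local α (d := fun w => D w j j)
      (r := fun w => ∑ k, ‖E w j k‖) (c := fun w => ∑ i, ‖E w i j‖)
      hMpos (hD j j z1 hz1Ω) hd1 hfa hf1 hga hg1 hfle hgle hfeq hgeq hP1 hbound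
    filter_upwards [hres, hWopen.mem_nhds hz1W] with z h1 h2
    refine ⟨h2, ?_⟩
    simp only [hF_def]
    exact (div_eq_iff (hqpos z (subset_closure h2)).ne').mpr h1
  -- the component of W containing z0
  set W0 : Set ℂ := connectedComponentIn W z0 with hW0_def
  have hW0open : IsOpen W0 := hWopen.connectedComponentIn
  have hW0pre : IsPreconnected W0 := isPreconnected_connectedComponentIn
  have hz0W0 : z0 ∈ W0 := mem_connectedComponentIn hz0W
  have hW0W : W0 ⊆ W := connectedComponentIn_subset _ _
  have hTopen : IsOpen {z | z ∈ W ∧ F z = M} := by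
    rw [isOpen_iff_mem_nhds]
    rintro z ⟨hzW, hzF⟩
    filter_upwards [key z hzW hzF] with w hw using hw
  have hNopen : IsOpen {z | z ∈ W ∧ F z ≠ M} := by
    have hco : ContinuousOn F W := hFc.mono subset_closure
    exact hco.isOpen_inter_preimage hWopen isOpen_compl_singleton
  have hW0T : ∀ z ∈ W0, F z = M := by
    by_contra hbad
    push_neg at hbad
    obtain ⟨w, hwW0, hwF⟩ := hbad
    have hcover : W0 ⊆ {z | z ∈ W ∧ F z = M} ∪ {z | z ∈ W ∧ F z ≠ M} := by
      intro z hz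
      by_cases h : F z = M
      · exact Or.inl ⟨hW0W hz, h⟩
      · exact Or.inr ⟨hW0W hz, h⟩
    obtain ⟨t, htW0, htu, htv⟩ := hW0pre _ _ hTopen hNopen hcover
      ⟨z0, hz0W0, hW0W hz0W0, rfl⟩ ⟨w, hwW0, hW0W hwW0, hwF⟩
    exact htv.2 htu.2
  -- W0 is not closed
  have hW0b : Bornology.IsBounded W0 := hWb.subset hW0W
  have hnc : ¬ closure W0 ⊆ W0 := by
    intro hsub
    have hclosed : IsClosed W0 := closure_subset_iff_isClosed.mp hsub
    have huniv : W0 = univ := IsClopen.eq_univ ⟨hclosed, hW0open⟩ ⟨z0, hz0W0⟩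
    rw [huniv] at hW0b
    obtain ⟨R, hR⟩ := hW0b.subset_closedBall (0 : ℂ)
    have h2 := hR (mem_univ ((|R| + 1 : ℝ) : ℂ))
    rw [mem_closedBall, dist_zero_right, Complex.norm_real, Real.norm_eq_abs] at h2
    have h3 : |R| + 1 ≤ R := le_trans (le_abs_self _) h2
    linarith [le_abs_self R, abs_nonneg R]
  obtain ⟨y, hyc, hyW0⟩ : ∃ y, y ∈ closure W0 ∧ y ∉ W0 := by
    rcases Set.not_subset.mp hnc with ⟨y, h1, h2⟩
    exact ⟨y, h1, h2⟩
  have hyclW : y ∈ closure W := closure_mono hW0W hyc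
  have hyW : y ∉ W := by
    intro hyW
    obtain ⟨ε, hε, hball⟩ := Metric.isOpen_iff.mp hWopen y hyW
    obtain ⟨p, hpW0, hpd⟩ := Metric.mem_closure_iff.mp hyc ε hε
    have hpball : p ∈ ball y ε := by rwa [mem_ball, dist_comm]
    have hunion : IsPreconnected (ball y ε ∪ W0) :=
      IsPreconnected.union p hpball hpW0 (convex_ball y ε).isPreconnected hW0pre
    have hsub2 : ball y ε ∪ W0 ⊆ W0 :=
      hunion.subset_connectedComponentIn (Or.inr hz0W0) (union_subset hball hW0W)
    exact hyW0 (hsub2 (Or.inl (mem_ball_self hε)))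
  have hyF : F y = M := by
    haveI := mem_closure_iff_nhdsWithin_neBot.mp hyc
    have h1 : Tendsto F (𝓝[W0] y) (𝓝 (F y)) :=
      (hFc y hyclW).tendsto.mono_left (nhdsWithin_mono y (hW0W.trans subset_closure))
    have h2 : Tendsto F (𝓝[W0] y) (𝓝 M) :=
      tendsto_const_nhds.congr' (eventually_mem_nhdsWithin.mono fun z hz => (hW0T z hz).symm)
    exact tendsto_nhds_unique h1 h2
  exact absurd hyF (ne_of_lt (lt_of_lt_of_le (hfrW y hyclW hyW) hM1))
end

section
/- Let A ∈ ℂ^{n×n} (n ≥ 1) be invertible. Then there exists a matrix E₀ ∈ ℂ^{n×n} of rank at most one such that ‖E₀‖ = ‖A⁻¹‖⁻¹ and A + E₀ is not invertible. -/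
open Set Metric

open Matrix

lemma aux_norm_attained {n : ℕ} (hn : 0 < n)
    (L : EuclideanSpace ℂ (Fin n) →L[ℂ] EuclideanSpace ℂ (Fin n)) :
    ∃ v : EuclideanSpace ℂ (Fin n), ‖v‖ = 1 ∧ ‖L v‖ = ‖L‖ := by
  have : Nontrivial (EuclideanSpace ℂ (Fin n)) := by
    haveI : Nonempty (Fin n) := ⟨⟨0, hn⟩⟩
    infer_instance
  obtain ⟨x0, hx0⟩ := exists_ne (0 : EuclideanSpace ℂ (Fin n))
  have hsne : (Metric.sphere (0 : EuclideanSpace ℂ (Fin n)) 1).Nonempty := by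
    refine ⟨(‖x0‖⁻¹ : ℝ) • x0, ?_⟩
    simp [norm_smul, abs_of_pos (inv_pos.mpr (norm_pos_iff.mpr hx0)),
      inv_mul_cancel₀ (norm_ne_zero_iff.mpr hx0)]
  have hc : IsCompact (Metric.sphere (0 : EuclideanSpace ℂ (Fin n)) 1) :=
    isCompact_sphere _ _
  obtain ⟨v, hv, hmax⟩ := hc.exists_isMaxOn hsne
    ((continuous_norm.comp L.continuous).continuousOn)
  have hv1 : ‖v‖ = 1 := by simpa using hv
  refine ⟨v, hv1, le_antisymm (by simpa [hv1] using L.le_opNorm v) ?_⟩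
  refine L.opNorm_le_bound (norm_nonneg _) (fun x => ?_)
  rcases eq_or_ne x 0 with rfl | hx
  · simp
  · have hxn : (0:ℝ) < ‖x‖ := norm_pos_iff.mpr hx
    have hxs : (‖x‖⁻¹ : ℂ) • x ∈ Metric.sphere (0 : EuclideanSpace ℂ (Fin n)) 1 := by
      simp [norm_smul, inv_mul_cancel₀ hxn.ne']
    have h2 : ‖x‖⁻¹ * ‖L x‖ ≤ ‖L v‖ := by
      have h3 := hmax hxs
      simp only [Set.mem_setOf_eq, Function.comp_apply, _root_.map_smul] at h3
      rw [norm_smul] at h3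
      simpa [Complex.norm_real, Real.norm_eq_abs, abs_of_pos hxn] using h3
    calc ‖L x‖ = ‖x‖ * (‖x‖⁻¹ * ‖L x‖) := by field_simp
      _ ≤ ‖x‖ * ‖L v‖ := mul_le_mul_of_nonneg_left h2 hxn.le
      _ = ‖L v‖ * ‖x‖ := mul_comm _ _

/-- for an invertible matrix `A` there is a rank-one (at most) perturbation
`E₀` with `‖E₀‖ = ‖A⁻¹‖⁻¹` making `A + E₀` singular. -/
theorem stmt_7 {n : ℕ} (hn : 0 < n) (A : Matrix (Fin n) (Fin n) ℂ) (hA : IsUnit A) :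
    ∃ E₀ : Matrix (Fin n) (Fin n) ℂ,
      E₀.rank ≤ 1 ∧ l2norm E₀ = (l2norm A⁻¹)⁻¹ ∧ ¬ IsUnit (A + E₀) := by
  classical
  set B := A⁻¹ with hB
  set L := Matrix.toEuclideanCLM (𝕜 := ℂ) B with hL
  obtain ⟨v, hv1, hvL⟩ := aux_norm_attained hn L
  have hdet : IsUnit A.det := (Matrix.isUnit_iff_isUnit_det A).mp hA
  have hAB : A * B = 1 := Matrix.mul_nonsing_inv A hdet
  set s : ℝ := ‖L‖ with hs
  have hsl : l2norm A⁻¹ = s := rfl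
  have hLne : L ≠ 0 := by
    intro h0
    have h1 : Matrix.toEuclideanCLM (𝕜 := ℂ) (A * B) = 1 := by rw [hAB]; simp
    rw [_root_.map_mul, ← hL, h0, mul_zero] at h1
    haveI : Nonempty (Fin n) := ⟨⟨0, hn⟩⟩
    haveI : Nontrivial (EuclideanSpace ℂ (Fin n)) := inferInstance
    exact zero_ne_one h1
  have hspos : 0 < s := by rw [hs]; exact norm_pos_iff.mpr hLne
  set u : EuclideanSpace ℂ (Fin n) := ((s⁻¹ : ℝ) : ℂ) • L v with hu
  have hu1 : ‖u‖ = 1 := by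
    rw [hu, norm_smul, hvL]
    have hns : ‖((s⁻¹ : ℝ) : ℂ)‖ = s⁻¹ := by
      rw [Complex.norm_real, Real.norm_eq_abs, abs_of_pos (inv_pos.mpr hspos)]
    rw [hns, inv_mul_cancel₀ hspos.ne']
  have hune : u ≠ 0 := by
    intro h; rw [h, norm_zero] at hu1; exact one_ne_zero hu1.symm
  -- plain-function versions of the vectors
  set uf : Fin n → ℂ := fun i => u i with huf
  set vf : Fin n → ℂ := fun i => v i with hvf
  have hAu : A.mulVec uf = ((s⁻¹ : ℝ) : ℂ) • vf := by
    have h1 : uf = ((s⁻¹ : ℝ) : ℂ) • (B.mulVec vf) := rfl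
    rw [h1, Matrix.mulVec_smul, Matrix.mulVec_mulVec, hAB, Matrix.one_mulVec]
  set c : ℂ := -(((s⁻¹ : ℝ) : ℂ)) with hc
  set E₀ : Matrix (Fin n) (Fin n) ℂ := Matrix.vecMulVec (c • vf) (star uf) with hE
  have hmulvec : ∀ x : Fin n → ℂ, E₀.mulVec x = (star uf ⬝ᵥ x) • (c • vf) := by
    intro x
    ext i
    simp [hE, Matrix.mulVec, Matrix.vecMulVec_apply, dotProduct,
      Finset.sum_mul, Finset.mul_sum, mul_comm, mul_left_comm, mul_assoc]
  have hinner : star uf ⬝ᵥ uf = 1 := by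
    have h1 : (inner ℂ u u : ℂ) = (1:ℂ) := by
      rw [inner_self_eq_norm_sq_to_K, hu1]; norm_num
    rw [← h1, PiLp.inner_apply]
    simp [dotProduct, RCLike.inner_apply, huf, mul_comm]
    exact Finset.sum_congr rfl fun i _ => Complex.mul_conj' _
  refine ⟨E₀, ?_, ?_, ?_⟩
  · have hrange : LinearMap.range E₀.mulVecLin ≤ Submodule.span ℂ {c • vf} := by
      rintro y ⟨x, rfl⟩
      rw [Matrix.mulVecLin_apply, hmulvec]
      exact Submodule.smul_mem _ _ (Submodule.mem_span_singleton_self _)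
    calc E₀.rank ≤ Module.finrank ℂ (Submodule.span ℂ {c • vf}) :=
          Submodule.finrank_mono hrange
      _ ≤ 1 := by
          have := finrank_span_le_card (R := ℂ) ({c • vf} : Set (Fin n → ℂ))
          simpa using this
  · have hkey : Matrix.toEuclideanCLM (𝕜 := ℂ) E₀ =
        (innerSL ℂ u).smulRight (c • v) := by
      refine ContinuousLinearMap.ext fun x => ?_
      refine PiLp.ext fun i => ?_
      have h1 : (Matrix.toEuclideanCLM (𝕜 := ℂ) E₀ x) i =
          E₀.mulVec (fun j => x j) i := rfl
      have h2 : (inner ℂ u x : ℂ) = star uf ⬝ᵥ (fun j => x j) := by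
        rw [PiLp.inner_apply]
        simp [dotProduct, RCLike.inner_apply, huf, mul_comm]
      rw [h1, hmulvec]
      show (star uf ⬝ᵥ (fun j => x j)) * (c • vf) i = (inner ℂ u x : ℂ) • ((c • v) i)
      rw [h2]
      simp [hvf, smul_eq_mul, mul_comm, mul_left_comm]
    rw [l2norm, hkey, ContinuousLinearMap.norm_smulRight_apply, innerSL_apply_norm,
      hu1, one_mul, norm_smul, hv1, mul_one, hsl, hc]
    simp [abs_of_pos (inv_pos.mpr hspos), hspos.le]
  · intro hunit
    have hdet2 : (A + E₀).det ≠ 0 :=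
      ((Matrix.isUnit_iff_isUnit_det _).mp hunit).ne_zero
    have hex : ∃ w, w ≠ 0 ∧ (A + E₀).mulVec w = 0 := by
      refine ⟨uf, ?_, ?_⟩
      · intro h
        apply hune
        ext i
        exact congrFun h i
      · rw [Matrix.add_mulVec, hAu, hmulvec, hinner, one_smul, hc]
        ext i; simp
    rw [Matrix.exists_mulVec_eq_zero_iff] at hex
    exact hdet2 hex
end

section
/- Let T : Ω → ℂ^{n×n} be analytic and let ε > 0. If U is a bounded connected component of the ε-pseudospectrum Λ_ε(T) whose closure is contained in Ω, then U contains an eigenvalue of T, i.e., there exists λ ∈ U with det(T(λ)) = 0. -/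
open Set Metric

lemma aux_det_analytic {n : ℕ} {M : ℂ → Matrix (Fin n) (Fin n) ℂ} {z : ℂ}
    (h : ∀ i j, AnalyticAt ℂ (fun w => M w i j) z) :
    AnalyticAt ℂ (fun w => (M w).det) z := by
  simp only [Matrix.det_apply']
  exact Finset.analyticAt_fun_sum _ fun σ _ =>
    analyticAt_const.mul (Finset.analyticAt_fun_prod _ fun i _ => h (σ i) i)

lemma aux_ecl_analytic {n : ℕ} {M : ℂ → Matrix (Fin n) (Fin n) ℂ} {z : ℂ}
    (h : ∀ i j, AnalyticAt ℂ (fun w => M w i j) z) :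
    AnalyticAt ℂ (fun w => Matrix.toEuclideanCLM (𝕜 := ℂ) (M w)) z := by
  have key : ∀ w, Matrix.toEuclideanCLM (𝕜 := ℂ) (M w) =
      ∑ i : Fin n, ∑ j : Fin n,
        M w i j • Matrix.toEuclideanCLM (𝕜 := ℂ) (Matrix.single i j 1) := by
    intro w
    conv_lhs => rw [Matrix.matrix_eq_sum_single (M w)]
    rw [map_sum]
    refine Finset.sum_congr rfl fun i _ => ?_
    rw [map_sum]
    refine Finset.sum_congr rfl fun j _ => ?_
    rw [← map_smul, Matrix.smul_single, smul_eq_mul, mul_one]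
  simp only [key]
  exact Finset.analyticAt_fun_sum _ fun i _ => Finset.analyticAt_fun_sum _ fun j _ =>
    (h i j).smul analyticAt_const

lemma aux_isUnit_iff {n : ℕ} (M : Matrix (Fin n) (Fin n) ℂ) :
    IsUnit (Matrix.toEuclideanCLM (𝕜 := ℂ) M) ↔ IsUnit M := by
  constructor
  · intro h
    have := h.map (Matrix.toEuclideanCLM (𝕜 := ℂ)).symm
    simpa using this
  · exact fun h => h.map _

lemma aux_inv_eq {n : ℕ} (M : Matrix (Fin n) (Fin n) ℂ) :
    Matrix.toEuclideanCLM (𝕜 := ℂ) M⁻¹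
      = Ring.inverse (Matrix.toEuclideanCLM (𝕜 := ℂ) M) := by
  rw [Matrix.nonsing_inv_eq_ringInverse]
  by_cases h : IsUnit M
  · obtain ⟨u, rfl⟩ := h
    set e := Matrix.toEuclideanCLM (𝕜 := ℂ) (n := Fin n)
    have hv : IsUnit (e ↑u) := u.isUnit.map _
    obtain ⟨v, hv⟩ := hv
    have hvinv : (↑v⁻¹ : _) = e ↑u⁻¹ := by
      have : (↑v : _) * e ↑u⁻¹ = 1 := by rw [hv, ← map_mul, u.mul_inv, map_one]
      calc (↑v⁻¹ : _) = ↑v⁻¹ * (↑v * e ↑u⁻¹) := by rw [this, mul_one]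
        _ = e ↑u⁻¹ := by rw [← mul_assoc, v.inv_mul, one_mul]
    rw [Ring.inverse_unit u, ← hv, Ring.inverse_unit v, hvinv]
  · rw [Ring.inverse_non_unit _ h, Ring.inverse_non_unit _ (fun hh => h ((aux_isUnit_iff M).1 hh)),
      map_zero]

/-- a bounded connected component of the `ε`-pseudospectrum whose closure is
contained in `Ω` contains an eigenvalue of `T`. -/
theorem stmt_8 {n : ℕ} (hn : 0 < n) {Ω : Set ℂ} (hΩo : IsOpen Ω) (hΩc : IsConnected Ω)
    (T : ℂ → Matrix (Fin n) (Fin n) ℂ) (hT : MatAnalyticOn T Ω)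
    (ε : ℝ) (hε : 0 < ε)
    {U : Set ℂ} (hUcc : ∃ x ∈ pspec T Ω ε, U = connectedComponentIn (pspec T Ω ε) x)
    (hUb : Bornology.IsBounded U) (hUΩ : closure U ⊆ Ω) :
    ∃ lam ∈ U, (T lam).det = 0 := by
  classical
  obtain ⟨x, hxP, hUeq⟩ := hUcc
  set A : ℂ → (EuclideanSpace ℂ (Fin n) →L[ℂ] EuclideanSpace ℂ (Fin n)) :=
    fun w => Matrix.toEuclideanCLM (𝕜 := ℂ) (T w) with hAdef
  haveI hnt : Nontrivial (EuclideanSpace ℂ (Fin n) →L[ℂ] EuclideanSpace ℂ (Fin n)) := by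
    refine ⟨1, 0, fun h => ?_⟩
    have h2 := congrArg (fun f : EuclideanSpace ℂ (Fin n) →L[ℂ] EuclideanSpace ℂ (Fin n) =>
      ‖f (EuclideanSpace.single ⟨0, hn⟩ (1 : ℂ))‖) h
    simp [EuclideanSpace.norm_single] at h2
  have hAan : ∀ z ∈ Ω, AnalyticAt ℂ A z := fun z hz =>
    aux_ecl_analytic (fun i j => hT i j z hz)
  have hnorm : ∀ w, l2norm (T w)⁻¹ = ‖Ring.inverse (A w)‖ := fun w => by
    rw [l2norm, aux_inv_eq]
  -- openness of the pseudospectrum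
  have hPopen : IsOpen (pspec T Ω ε) := by
    rw [isOpen_iff_mem_nhds]
    rintro z ⟨hzΩ, hz2⟩
    have hct : ContinuousAt A z := (hAan z hzΩ).continuousAt
    by_cases hu : IsUnit (T z)
    · obtain ⟨v, hv⟩ := (aux_isUnit_iff (T z)).2 hu
      have h1 : ContinuousAt (fun w => ‖Ring.inverse (A w)‖) z := by
        have hv' : (↑v : EuclideanSpace ℂ (Fin n) →L[ℂ] EuclideanSpace ℂ (Fin n)) = A z := hv
        have : ContinuousAt Ring.inverse (A z) := by
          rw [← hv']; exact NormedRing.inverse_continuousAt v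
        exact (this.comp hct).norm
      have hgt : ε⁻¹ < ‖Ring.inverse (A z)‖ := by
        rcases hz2 with h | h
        · exact absurd hu h
        · rwa [hnorm] at h
      have h2 : ∀ᶠ w in nhds z, ε⁻¹ < ‖Ring.inverse (A w)‖ :=
        h1.eventually (eventually_gt_nhds hgt)
      filter_upwards [h2, hΩo.mem_nhds hzΩ] with w hw hwΩ
      exact ⟨hwΩ, Or.inr (by rw [hnorm]; exact hw)⟩
    · have hnu : ¬ IsUnit (A z) := fun h => hu ((aux_isUnit_iff _).1 h)
      have h2 : ∀ᶠ w in nhds z, ‖A w - A z‖ < ε := by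
        have := hct (Metric.ball_mem_nhds (A z) hε)
        filter_upwards [this] with w hw
        have hb : A w ∈ Metric.ball (A z) ε := hw
        rwa [mem_ball_iff_norm] at hb
      filter_upwards [h2, hΩo.mem_nhds hzΩ] with w hw hwΩ
      refine ⟨hwΩ, ?_⟩
      by_cases h : IsUnit (T w)
      · right
        rw [hnorm]
        by_contra hle
        push_neg at hle
        obtain ⟨v, hv⟩ := (aux_isUnit_iff (T w)).2 h
        have hv' : (↑v : EuclideanSpace ℂ (Fin n) →L[ℂ] EuclideanSpace ℂ (Fin n)) = A w := hv
        have hinv : Ring.inverse (A w) = (↑v⁻¹ : _) := by rw [← hv', Ring.inverse_unit]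
        rw [hinv] at hle
        have hvpos : (0 : ℝ) < ‖(↑v⁻¹ : EuclideanSpace ℂ (Fin n) →L[ℂ] EuclideanSpace ℂ (Fin n))‖ :=
          Units.norm_pos v⁻¹
        have hεle : ε ≤ ‖(↑v⁻¹ : EuclideanSpace ℂ (Fin n) →L[ℂ] EuclideanSpace ℂ (Fin n))‖⁻¹ := by
          rw [← inv_inv ε]
          exact inv_anti₀ hvpos hle
        have hnear : ‖A z - ↑v‖ < ‖(↑v⁻¹ : EuclideanSpace ℂ (Fin n) →L[ℂ]
            EuclideanSpace ℂ (Fin n))‖⁻¹ := by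
          rw [hv', norm_sub_rev]
          exact lt_of_lt_of_le hw hεle
        exact hnu ((Units.ofNearby v (A z) hnear).isUnit)
      · exact Or.inl h
  -- component facts
  have hUopen : IsOpen U := hUeq ▸ hPopen.connectedComponentIn
  have hUP : U ⊆ pspec T Ω ε := hUeq ▸ connectedComponentIn_subset _ _
  have hxU : x ∈ U := hUeq ▸ mem_connectedComponentIn hxP
  have hfr : ∀ z ∈ frontier U, z ∉ pspec T Ω ε := by
    intro z hz hzP
    have hz1 : z ∈ closure U := frontier_subset_closure hz
    have hz2 : z ∉ U := by
      rw [hUopen.frontier_eq] at hz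
      exact hz.2
    have hcomp : connectedComponentIn (pspec T Ω ε) z ∈ nhds z :=
      connectedComponentIn_mem_nhds (hPopen.mem_nhds hzP)
    obtain ⟨y, hy1, hy2⟩ := mem_closure_iff_nhds.1 hz1 _ hcomp
    have e1 : connectedComponentIn (pspec T Ω ε) z = connectedComponentIn (pspec T Ω ε) y :=
      connectedComponentIn_eq hy1
    have e2 : connectedComponentIn (pspec T Ω ε) x = connectedComponentIn (pspec T Ω ε) y :=
      connectedComponentIn_eq (hUeq ▸ hy2)
    have : z ∈ U := by
      rw [hUeq, e2, ← e1]
      exact mem_connectedComponentIn hzP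
    exact hz2 this
  -- suppose no eigenvalue in U
  by_contra hcon
  push_neg at hcon
  have hclU : ∀ z ∈ closure U, (T z).det ≠ 0 := by
    intro z hz
    rw [closure_eq_self_union_frontier] at hz
    rcases hz with hz | hz
    · exact hcon z hz
    · have hzΩ : z ∈ Ω := hUΩ (frontier_subset_closure hz)
      have := hfr z hz
      simp only [pspec, Set.mem_sep_iff, not_and, not_or, not_lt, not_not] at this
      have h := (this hzΩ).1
      exact (isUnit_iff_ne_zero.1 ((Matrix.isUnit_iff_isUnit_det _).1 h))
  set f : ℂ → (EuclideanSpace ℂ (Fin n) →L[ℂ] EuclideanSpace ℂ (Fin n)) :=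
    fun w => ((T w).det)⁻¹ • Matrix.toEuclideanCLM (𝕜 := ℂ) ((T w).adjugate) with hfdef
  have hfeq : ∀ w, f w = Matrix.toEuclideanCLM (𝕜 := ℂ) ((T w)⁻¹) := by
    intro w
    rw [hfdef]
    simp only [Matrix.inv_def, Ring.inverse_eq_inv', map_smul]
  have hfnorm : ∀ w, ‖f w‖ = l2norm (T w)⁻¹ := fun w => by rw [hfeq, l2norm]
  have hfa : ∀ z ∈ closure U, AnalyticAt ℂ f z := by
    intro z hz
    have hzΩ := hUΩ hz
    have hdet : AnalyticAt ℂ (fun w => (T w).det) z :=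
      aux_det_analytic (fun i j => hT i j z hzΩ)
    have hadj : AnalyticAt ℂ (fun w => Matrix.toEuclideanCLM (𝕜 := ℂ) ((T w).adjugate)) z := by
      apply aux_ecl_analytic
      intro i j
      simp only [Matrix.adjugate_apply]
      apply aux_det_analytic
      intro k l
      by_cases hk : k = j
      · simp only [Matrix.updateRow_apply, hk, if_pos rfl]
        exact analyticAt_const
      · simp only [Matrix.updateRow_apply, if_neg hk]
        exact hT k l z hzΩ
    exact (hdet.inv (hclU z hz)).smul hadj
  have hdc : DiffContOnCl ℂ f U :=
    ⟨fun z hz => (hfa z (subset_closure hz)).differentiableAt.differentiableWithinAt,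
     fun z hz => (hfa z hz).continuousAt.continuousWithinAt⟩
  have hbd : ∀ z ∈ frontier U, ‖f z‖ ≤ ε⁻¹ := by
    intro z hz
    have hzΩ : z ∈ Ω := hUΩ (frontier_subset_closure hz)
    rw [hfnorm]
    by_contra hlt
    push_neg at hlt
    exact hfr z hz ⟨hzΩ, Or.inr hlt⟩
  have hmax : ‖f x‖ ≤ ε⁻¹ :=
    Complex.norm_le_of_forall_mem_frontier_norm_le hUb hdc hbd (subset_closure hxU)
  obtain ⟨hxΩ, hx2⟩ := hxP
  have hdx : (T x).det ≠ 0 := hcon x hxU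
  have hux : IsUnit (T x) := (Matrix.isUnit_iff_isUnit_det _).2 (isUnit_iff_ne_zero.2 hdx)
  rcases hx2 with h | h
  · exact h hux
  · rw [← hfnorm x] at h
    exact absurd hmax (not_le.2 h)
end

section
/- Let A ∈ ℂ^{n×n} and let V ∈ ℂ^{n×n} be invertible such that each column v_i of V has unit Euclidean norm and satisfies A·v_i = λ_i·v_i for scalars λ_1, …, λ_n; let w_i* denote the i-th row of V⁻¹ (so that w_i*·v_i = 1). Let F be a fixed entrywise-nonnegative real n×n matrix, let E : Ω → ℂ^{n×n} be analytic with |E(z)_{ij}| ≤ F_{ij} for all z ∈ Ω and all indices i, j, and set T(z) = A − zI + E(z). If λ ∈ Ω satisfies det(T(λ)) = 0, then there exists an index i such that |λ − λ_i| ≤ n · ‖F‖₂ · ‖w_i‖₂, where ‖F‖₂ is the spectral norm of F and ‖w_i‖₂ is the Euclidean norm of the i-th row of V⁻¹. -/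
open Set Metric

section BFaux
variable {n : ℕ}

lemma e2norm_nonneg (v : Fin n → ℂ) : 0 ≤ e2norm v := Real.sqrt_nonneg _

lemma e2norm_eq_norm (v : Fin n → ℂ) :
    e2norm v = ‖(WithLp.linearEquiv 2 ℂ (Fin n → ℂ)).symm v‖ := by
  rw [EuclideanSpace.norm_eq]
  simp [e2norm, WithLp.linearEquiv_symm_apply]

lemma e2norm_mulVec_le (M : Matrix (Fin n) (Fin n) ℂ) (x : Fin n → ℂ) :
    e2norm (M.mulVec x) ≤ l2norm M * e2norm x := by
  rw [e2norm_eq_norm, e2norm_eq_norm, l2norm]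
  have h := (Matrix.toEuclideanCLM (𝕜 := ℂ) M).le_opNorm
    ((WithLp.linearEquiv 2 ℂ (Fin n → ℂ)).symm x)
  have h2 : Matrix.toEuclideanCLM (𝕜 := ℂ) M ((WithLp.linearEquiv 2 ℂ (Fin n → ℂ)).symm x)
      = (WithLp.linearEquiv 2 ℂ (Fin n → ℂ)).symm (M.mulVec x) := by
    simp [WithLp.linearEquiv_symm_apply, WithLp.coe_symm_linearEquiv, WithLp.coe_linearEquiv, Matrix.toEuclideanCLM_toLp,
      Matrix.toLin'_apply]
  rwa [h2] at h

lemma l2norm_le_l2normR (M : Matrix (Fin n) (Fin n) ℂ) (F : Matrix (Fin n) (Fin n) ℝ)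
    (h : ∀ i j, ‖M i j‖ ≤ F i j) : l2norm M ≤ l2normR F := by
  refine ContinuousLinearMap.opNorm_le_bound _ (norm_nonneg _) fun x => ?_
  set xv : Fin n → ℂ := WithLp.linearEquiv 2 ℂ (Fin n → ℂ) x with hxv
  set ax : Fin n → ℝ := fun j => ‖xv j‖ with hax
  have hxx : x = (WithLp.linearEquiv 2 ℂ (Fin n → ℂ)).symm xv := by simp [hxv]
  have hMx : Matrix.toEuclideanCLM (𝕜 := ℂ) M x
      = (WithLp.linearEquiv 2 ℂ (Fin n → ℂ)).symm (M.mulVec xv) := by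
    rw [hxx]
    simp [WithLp.linearEquiv_symm_apply, WithLp.linearEquiv_apply,
      WithLp.coe_symm_linearEquiv, WithLp.coe_linearEquiv, Matrix.toEuclideanCLM_toLp, Matrix.toLin'_apply]
  -- step A : ‖M x‖ ≤ ‖F |x|‖
  have stepA : ‖Matrix.toEuclideanCLM (𝕜 := ℂ) M x‖
      ≤ ‖(WithLp.linearEquiv 2 ℝ (Fin n → ℝ)).symm (F.mulVec ax)‖ := by
    rw [hMx, EuclideanSpace.norm_eq, EuclideanSpace.norm_eq]
    apply Real.sqrt_le_sqrt
    apply Finset.sum_le_sum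
    intro i _
    simp only [WithLp.linearEquiv_symm_apply, WithLp.coe_symm_linearEquiv, PiLp.toLp_apply]
    have h1 : ‖M.mulVec xv i‖ ≤ F.mulVec ax i := by
      unfold Matrix.mulVec dotProduct
      calc ‖∑ j, M i j * xv j‖ ≤ ∑ j, ‖M i j * xv j‖ := norm_sum_le _ _
        _ ≤ ∑ j, F i j * ax j := by
            apply Finset.sum_le_sum
            intro j _
            rw [norm_mul]
            exact mul_le_mul_of_nonneg_right (h i j) (norm_nonneg _)
    calc ‖M.mulVec xv i‖ ^ 2 ≤ (F.mulVec ax i) ^ 2 := by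
          exact pow_le_pow_left₀ (norm_nonneg _) h1 2
      _ ≤ ‖F.mulVec ax i‖ ^ 2 := by rw [Real.norm_eq_abs, sq_abs]
  -- step B : ‖F |x|‖ ≤ ‖F‖ ‖|x|‖
  have stepB : ‖(WithLp.linearEquiv 2 ℝ (Fin n → ℝ)).symm (F.mulVec ax)‖
      ≤ l2normR F * ‖(WithLp.linearEquiv 2 ℝ (Fin n → ℝ)).symm ax‖ := by
    have h2 : Matrix.toEuclideanCLM (𝕜 := ℝ) F ((WithLp.linearEquiv 2 ℝ (Fin n → ℝ)).symm ax)
        = (WithLp.linearEquiv 2 ℝ (Fin n → ℝ)).symm (F.mulVec ax) := by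
      simp [WithLp.linearEquiv_symm_apply, WithLp.coe_symm_linearEquiv, WithLp.coe_linearEquiv, Matrix.toEuclideanCLM_toLp,
        Matrix.toLin'_apply]
    rw [← h2]
    exact (Matrix.toEuclideanCLM (𝕜 := ℝ) F).le_opNorm _
  -- step C : ‖|x|‖ = ‖x‖
  have stepC : ‖(WithLp.linearEquiv 2 ℝ (Fin n → ℝ)).symm ax‖ = ‖x‖ := by
    rw [EuclideanSpace.norm_eq, EuclideanSpace.norm_eq]
    congr 1
    apply Finset.sum_congr rfl
    intro i _
    simp [hax, hxv, WithLp.linearEquiv_symm_apply, Real.norm_eq_abs,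
      abs_norm, WithLp.linearEquiv_apply, WithLp.coe_linearEquiv, WithLp.coe_symm_linearEquiv]
  calc ‖Matrix.toEuclideanCLM (𝕜 := ℂ) M x‖
      ≤ l2normR F * ‖(WithLp.linearEquiv 2 ℝ (Fin n → ℝ)).symm ax‖ := stepA.trans stepB
    _ = l2normR F * ‖x‖ := by rw [stepC]

lemma cauchy_schwarz_abs (a b : Fin n → ℂ) :
    ‖∑ k, a k * b k‖ ≤ e2norm a * e2norm b := by
  calc ‖∑ k, a k * b k‖ ≤ ∑ k, ‖a k * b k‖ :=
        norm_sum_le _ _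
    _ = ∑ k, ‖a k‖ * ‖b k‖ := by simp [norm_mul]
    _ ≤ e2norm a * e2norm b := Real.sum_mul_le_sqrt_mul_sqrt _ _ _

theorem stmt_14' {n : ℕ} (hn : 0 < n) {Ω : Set ℂ}
    (A V : Matrix (Fin n) (Fin n) ℂ) (hV : IsUnit V)
    (lams : Fin n → ℂ)
    (hcols : ∀ i, e2norm (fun k => V k i) = 1)
    (heig : ∀ i, A.mulVec (fun k => V k i) = lams i • (fun k => V k i))
    (F : Matrix (Fin n) (Fin n) ℝ)
    (E : ℂ → Matrix (Fin n) (Fin n) ℂ)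
    (hEF : ∀ z ∈ Ω, ∀ i j, ‖E z i j‖ ≤ F i j)
    (T : ℂ → Matrix (Fin n) (Fin n) ℂ)
    (hTdef : T = fun z => A - z • (1 : Matrix (Fin n) (Fin n) ℂ) + E z)
    (lam : ℂ) (hlam : lam ∈ Ω) (hdet : (T lam).det = 0) :
    ∃ i, ‖lam - lams i‖ ≤ n * l2normR F * e2norm (fun k => V⁻¹ i k) := by
  subst hTdef
  obtain ⟨x, hx0, hxker⟩ := Matrix.exists_mulVec_eq_zero_iff.2 hdet
  have hVd : IsUnit V.det := (Matrix.isUnit_iff_isUnit_det V).1 hV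
  have hVV : V⁻¹ * V = 1 := Matrix.nonsing_inv_mul V hVd
  have hVV' : V * V⁻¹ = 1 := Matrix.mul_nonsing_inv V hVd
  have hAV : A * V = V * Matrix.diagonal lams := by
    ext k i
    rw [Matrix.mul_apply, Matrix.mul_diagonal]
    have h := congrFun (heig i) k
    simp only [Matrix.mulVec, dotProduct, Pi.smul_apply, smul_eq_mul] at h
    rw [h]; ring
  have hA' : V⁻¹ * A = Matrix.diagonal lams * V⁻¹ := by
    calc V⁻¹ * A = V⁻¹ * A * (V * V⁻¹) := by rw [hVV', Matrix.mul_one]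
      _ = V⁻¹ * (A * V) * V⁻¹ := by simp only [Matrix.mul_assoc]
      _ = V⁻¹ * (V * Matrix.diagonal lams) * V⁻¹ := by rw [hAV]
      _ = (V⁻¹ * V) * Matrix.diagonal lams * V⁻¹ := by simp only [Matrix.mul_assoc]
      _ = Matrix.diagonal lams * V⁻¹ := by rw [hVV, Matrix.one_mul]
  set y := V⁻¹.mulVec x with hy
  set g := (E lam).mulVec x with hg
  have hAx : A.mulVec x = lam • x - g := by
    rw [Matrix.add_mulVec, Matrix.sub_mulVec, Matrix.smul_mulVec,
      Matrix.one_mulVec] at hxker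
    have h1 : A.mulVec x - lam • x = -g := by
      rwa [add_eq_zero_iff_eq_neg] at hxker
    have := sub_eq_iff_eq_add.1 h1
    rw [this]; abel
  have hDy : (Matrix.diagonal lams).mulVec y = lam • y - V⁻¹.mulVec g := by
    calc (Matrix.diagonal lams).mulVec y = (Matrix.diagonal lams * V⁻¹).mulVec x := by
          rw [hy, Matrix.mulVec_mulVec]
      _ = (V⁻¹ * A).mulVec x := by rw [hA']
      _ = V⁻¹.mulVec (A.mulVec x) := by rw [Matrix.mulVec_mulVec]
      _ = V⁻¹.mulVec (lam • x - g) := by rw [hAx]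
      _ = lam • y - V⁻¹.mulVec g := by
          rw [Matrix.mulVec_sub, Matrix.mulVec_smul, hy]
  have hcomp : ∀ i, (lams i - lam) * y i = -(V⁻¹.mulVec g i) := by
    intro i
    have h := congrFun hDy i
    rw [Matrix.mulVec_diagonal] at h
    simp only [Pi.sub_apply, Pi.smul_apply, smul_eq_mul] at h
    linear_combination h
  -- x = V y
  have hx : x = V.mulVec y := by
    rw [hy, Matrix.mulVec_mulVec, hVV', Matrix.one_mulVec]
  -- norm of x bounded by sum of |y i|
  have hxsum : e2norm x ≤ ∑ i, ‖y i‖ := by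
    have hxe : x = ∑ i, y i • (fun k => V k i) := by
      funext k
      rw [hx]
      simp only [Matrix.mulVec, dotProduct, Finset.sum_apply, Pi.smul_apply,
        smul_eq_mul]
      exact Finset.sum_congr rfl fun i _ => mul_comm _ _
    rw [e2norm_eq_norm, hxe, map_sum]
    calc ‖∑ i, (WithLp.linearEquiv 2 ℂ (Fin n → ℂ)).symm (y i • fun k => V k i)‖
        ≤ ∑ i, ‖(WithLp.linearEquiv 2 ℂ (Fin n → ℂ)).symm (y i • fun k => V k i)‖ :=
          norm_sum_le _ _
      _ = ∑ i, ‖y i‖ := by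
          apply Finset.sum_congr rfl
          intro i _
          rw [map_smul, norm_smul, ← e2norm_eq_norm, hcols i, mul_one]
  -- argmax
  obtain ⟨i0, -, hmax⟩ := Finset.exists_max_image Finset.univ
    (fun i => ‖y i‖) ⟨⟨0, hn⟩, Finset.mem_univ _⟩
  have hy0 : y ≠ 0 := by
    intro h
    apply hx0
    rw [hx, h, Matrix.mulVec_zero]
  obtain ⟨j, hj⟩ := Function.ne_iff.1 hy0
  have hyi0 : 0 < ‖y i0‖ :=
    lt_of_lt_of_le (by simpa using hj) (hmax j (Finset.mem_univ _))
  have hsum : ∑ i, ‖y i‖ ≤ n * ‖y i0‖ := by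
    calc ∑ i, ‖y i‖ ≤ Finset.univ.card • ‖y i0‖ :=
          Finset.sum_le_card_nsmul _ _ _ fun i _ => hmax i (Finset.mem_univ _)
      _ = n * ‖y i0‖ := by simp [nsmul_eq_mul]
  -- key chain
  have hEb : l2norm (E lam) ≤ l2normR F := l2norm_le_l2normR _ _ (hEF lam hlam)
  have hg2 : e2norm g ≤ l2normR F * e2norm x :=
    (e2norm_mulVec_le _ _).trans (mul_le_mul_of_nonneg_right hEb (e2norm_nonneg _))
  have hx2 : e2norm x ≤ n * ‖y i0‖ := hxsum.trans hsum
  have hrow : (0:ℝ) ≤ e2norm (fun k => V⁻¹ i0 k) := e2norm_nonneg _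
  have hF0 : (0:ℝ) ≤ l2normR F := norm_nonneg _
  have main : ‖lam - lams i0‖ * ‖y i0‖
      ≤ (n * l2normR F * e2norm (fun k => V⁻¹ i0 k)) * ‖y i0‖ := by
    calc ‖lam - lams i0‖ * ‖y i0‖
        = ‖(lams i0 - lam) * y i0‖ := by
          rw [norm_mul, norm_sub_rev lam (lams i0)]
      _ = ‖V⁻¹.mulVec g i0‖ := by rw [hcomp i0, norm_neg]
      _ ≤ e2norm (fun k => V⁻¹ i0 k) * e2norm g := by
          have : V⁻¹.mulVec g i0 = ∑ k, V⁻¹ i0 k * g k := rfl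
          rw [this]
          exact cauchy_schwarz_abs _ _
      _ ≤ e2norm (fun k => V⁻¹ i0 k) * (l2normR F * (n * ‖y i0‖)) := by
          apply mul_le_mul_of_nonneg_left _ hrow
          exact hg2.trans (mul_le_mul_of_nonneg_left hx2 hF0)
      _ = (n * l2normR F * e2norm (fun k => V⁻¹ i0 k)) * ‖y i0‖ := by ring
  exact ⟨i0, le_of_mul_le_mul_right main hyi0⟩

end BFaux

/-- nonlinear Bauer–Fike theorem (inclusion part). Every eigenvalue of
`T(z) = A - zI + E(z)`, with `A` diagonalized by `V` (unit-norm columns) and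
`|E(z)| ≤ F` entrywise, lies within distance `n ‖F‖₂ ‖wᵢ‖₂` of some eigenvalue `λᵢ`,
where `wᵢ*` is the `i`-th row of `V⁻¹`. -/
theorem stmt_14 {n : ℕ} (hn : 0 < n) {Ω : Set ℂ} (hΩo : IsOpen Ω) (hΩc : IsConnected Ω)
    (A V : Matrix (Fin n) (Fin n) ℂ) (hV : IsUnit V)
    (lams : Fin n → ℂ)
    (hcols : ∀ i, e2norm (fun k => V k i) = 1)
    (heig : ∀ i, A.mulVec (fun k => V k i) = lams i • (fun k => V k i))
    (F : Matrix (Fin n) (Fin n) ℝ) (hF : ∀ i j, 0 ≤ F i j)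
    (E : ℂ → Matrix (Fin n) (Fin n) ℂ) (hE : MatAnalyticOn E Ω)
    (hEF : ∀ z ∈ Ω, ∀ i j, ‖E z i j‖ ≤ F i j)
    (T : ℂ → Matrix (Fin n) (Fin n) ℂ)
    (hTdef : T = fun z => A - z • (1 : Matrix (Fin n) (Fin n) ℂ) + E z)
    (lam : ℂ) (hlam : lam ∈ Ω) (hdet : (T lam).det = 0) :
    ∃ i, ‖lam - lams i‖ ≤ n * l2normR F * e2norm (fun k => V⁻¹ i k) := by
  exact stmt_14' hn A V hV lams hcols heig F E hEF
    (fun z => A - z • (1 : Matrix (Fin n) (Fin n) ℂ) + E z) rfl lam hlam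
    (by rw [hTdef] at hdet; exact hdet)
end

section
/- Let V ∈ ℂ^{n×n} be invertible with each column of unit Euclidean norm, let E ∈ ℂ^{n×n}, and let F be an entrywise-nonnegative real n×n matrix with |E_{ij}| ≤ F_{ij} for all i, j. Then for every index i, the i-th absolute row sum of V⁻¹·E·V satisfies Σ_{j=1}^n |(V⁻¹ E V)_{ij}| ≤ n · ‖F‖₂ · ‖w_i‖₂, where ‖F‖₂ is the spectral norm of F and ‖w_i‖₂ is the Euclidean norm of the i-th row of V⁻¹. -/
open Set Metric

lemma mulVec_sqrt_bound {n : ℕ} (F : Matrix (Fin n) (Fin n) ℝ) (x : Fin n → ℝ) :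
    Real.sqrt (∑ k, (F.mulVec x k) ^ 2) ≤ l2normR F * Real.sqrt (∑ k, x k ^ 2) := by
  have h := (Matrix.toEuclideanCLM (𝕜 := ℝ) F).le_opNorm ((WithLp.equiv 2 _).symm x)
  have h1 : (Matrix.toEuclideanCLM (𝕜 := ℝ) F) ((WithLp.equiv 2 _).symm x) =
      (WithLp.equiv 2 _).symm (F.mulVec x) := by
    exact Matrix.toEuclideanCLM_toLp F x
  rw [h1] at h
  have hn : ∀ y : Fin n → ℝ, ‖(WithLp.equiv 2 (Fin n → ℝ)).symm y‖ = Real.sqrt (∑ k, y k ^ 2) := by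
    intro y
    rw [EuclideanSpace.norm_eq]
    congr 1
    refine Finset.sum_congr rfl fun k _ => ?_
    show ‖y k‖ ^ 2 = y k ^ 2
    rw [Real.norm_eq_abs, sq_abs]
  rw [hn, hn] at h
  exact h


/-- the row-sum bound from the Bauer–Fike proof: the `i`-th absolute row sum
of `V⁻¹ E V` is at most `n ‖F‖₂ ‖wᵢ‖₂`, where `wᵢ*` is the `i`-th row of `V⁻¹`. -/
theorem stmt_16 {n : ℕ} (hn : 0 < n) (V E : Matrix (Fin n) (Fin n) ℂ) (hV : IsUnit V)
    (hcols : ∀ i, e2norm (fun k => V k i) = 1)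
    (F : Matrix (Fin n) (Fin n) ℝ) (hF : ∀ i j, 0 ≤ F i j)
    (hEF : ∀ i j, ‖E i j‖ ≤ F i j) (i : Fin n) :
    ∑ j, ‖(V⁻¹ * E * V) i j‖ ≤ n * l2normR F * e2norm (fun k => V⁻¹ i k) := by
  set a : Fin n → ℝ := fun k => ‖V⁻¹ i k‖ with ha
  set b : Fin n → ℝ := fun l => ∑ j, ‖V l j‖ with hb
  -- Step 1
  have step1 : ∑ j, ‖(V⁻¹ * E * V) i j‖ ≤ ∑ k, a k * F.mulVec b k := by
    have key : ∀ j, ‖(V⁻¹ * E * V) i j‖ ≤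
        ∑ k, ∑ l, a k * (F k l * ‖V l j‖) := by
      intro j
      have expand : (V⁻¹ * E * V) i j = ∑ k, ∑ l, V⁻¹ i k * (E k l * V l j) := by
        simp [Matrix.mul_apply, Finset.mul_sum, Finset.sum_mul, mul_assoc]
        rw [Finset.sum_comm]
      rw [expand]
      refine le_trans (norm_sum_le _ _) (Finset.sum_le_sum fun k _ => ?_)
      refine le_trans (norm_sum_le _ _) (Finset.sum_le_sum fun l _ => ?_)
      rw [norm_mul, norm_mul]
      have h1 : (0:ℝ) ≤ ‖V⁻¹ i k‖ := norm_nonneg _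
      have h2 : (0:ℝ) ≤ ‖V l j‖ := norm_nonneg _
      exact mul_le_mul_of_nonneg_left
        (mul_le_mul_of_nonneg_right (hEF k l) h2) h1
    calc ∑ j, ‖(V⁻¹ * E * V) i j‖
        ≤ ∑ j, ∑ k, ∑ l, a k * (F k l * ‖V l j‖) :=
          Finset.sum_le_sum fun j _ => key j
      _ = ∑ k, a k * F.mulVec b k := by
          rw [Finset.sum_comm]
          refine Finset.sum_congr rfl fun k _ => ?_
          rw [Finset.sum_comm, Matrix.mulVec, dotProduct, Finset.mul_sum]
          refine Finset.sum_congr rfl fun l _ => ?_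
          rw [hb, Finset.mul_sum, Finset.mul_sum]
  -- Cauchy–Schwarz + opNorm
  have step2 : ∑ k, a k * F.mulVec b k ≤
      Real.sqrt (∑ k, a k ^ 2) * (l2normR F * Real.sqrt (∑ k, b k ^ 2)) := by
    refine le_trans (Real.sum_mul_le_sqrt_mul_sqrt _ _ _) ?_
    exact mul_le_mul_of_nonneg_left (mulVec_sqrt_bound F b) (Real.sqrt_nonneg _)
  -- ‖b‖ ≤ n
  have hbn : Real.sqrt (∑ k, b k ^ 2) ≤ n := by
    have hsq : ∑ k, b k ^ 2 ≤ (n : ℝ) ^ 2 := by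
      calc ∑ l, b l ^ 2
          ≤ ∑ l : Fin n, (n : ℝ) * ∑ j, ‖V l j‖ ^ 2 := by
            refine Finset.sum_le_sum fun l _ => ?_
            rw [hb]
            simpa using sq_sum_le_card_mul_sum_sq (s := Finset.univ)
              (f := fun j => ‖V l j‖)
        _ = (n : ℝ) * ∑ j, ∑ l, ‖V l j‖ ^ 2 := by
            rw [← Finset.mul_sum, Finset.sum_comm]
        _ = (n : ℝ) ^ 2 := by
            have hc : ∀ j, ∑ l, ‖V l j‖ ^ 2 = 1 := by
              intro j
              have h := hcols j
              rw [e2norm] at h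
              have h2 : (0:ℝ) ≤ ∑ k, ‖V k j‖ ^ 2 :=
                Finset.sum_nonneg fun k _ => sq_nonneg _
              nlinarith [Real.sq_sqrt h2]
            simp only [hc]
            simp [sq]
    calc Real.sqrt (∑ k, b k ^ 2) ≤ Real.sqrt ((n:ℝ)^2) := Real.sqrt_le_sqrt hsq
      _ = n := by rw [Real.sqrt_sq (Nat.cast_nonneg n)]
  have hae : Real.sqrt (∑ k, a k ^ 2) = e2norm (fun k => V⁻¹ i k) := rfl
  have hFnn : 0 ≤ l2normR F := norm_nonneg _
  calc ∑ j, ‖(V⁻¹ * E * V) i j‖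
      ≤ Real.sqrt (∑ k, a k ^ 2) * (l2normR F * Real.sqrt (∑ k, b k ^ 2)) :=
        step1.trans step2
    _ ≤ Real.sqrt (∑ k, a k ^ 2) * (l2normR F * n) := by
        refine mul_le_mul_of_nonneg_left (mul_le_mul_of_nonneg_left hbn hFnn)
          (Real.sqrt_nonneg _)
    _ = n * l2normR F * e2norm (fun k => V⁻¹ i k) := by rw [hae]; ring
end

section
/- Let β, λ̂, w ∈ ℂ satisfy β·exp(λ̂) + λ̂² = 0. Then |β·exp(λ̂ + w) + (λ̂ + w)² − λ̂(2 − λ̂)·w| ≤ (1 + (|λ̂|²/2)·exp(|w|)) · |w|². -/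
open Set Metric

set_option maxHeartbeats 1000000

open scoped Nat in
lemma exp_taylor2_bound (w : ℂ) :
    ‖Complex.exp w - 1 - w‖ ≤
      ‖w‖ ^ 2 / 2 * Real.exp ‖w‖ := by
  have hsum : Summable fun n : ℕ => w ^ n / (n ! : ℂ) :=
    NormedSpace.expSeries_div_summable w
  have hexp : Complex.exp w = ∑' n : ℕ, w ^ n / n ! := by
    rw [Complex.exp_eq_exp_ℂ, NormedSpace.exp_eq_tsum_div]
  have hsum1 : Summable fun n : ℕ => w ^ (n + 1) / ((n + 1)! : ℂ) :=
    (summable_nat_add_iff 1).2 hsum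
  have hsum2 : Summable fun n : ℕ => w ^ (n + 2) / ((n + 2)! : ℂ) :=
    (summable_nat_add_iff 2).2 hsum
  have h2 : Complex.exp w - 1 - w = ∑' n : ℕ, w ^ (n + 2) / (n + 2)! := by
    rw [hexp, hsum.tsum_eq_zero_add, hsum1.tsum_eq_zero_add]
    simp [Nat.factorial]
  rw [h2]
  have habs : ∀ n : ℕ, ‖w ^ (n + 2) / (n + 2)!‖ ≤
      ‖w‖ ^ 2 / 2 * (‖w‖ ^ n / n !) := by
    intro n
    rw [norm_div, norm_pow]
    have h1 : ‖((n + 2)! : ℂ)‖ = ((n + 2)! : ℝ) := by simp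
    rw [h1]
    have hrhs : ‖w‖ ^ 2 / 2 * (‖w‖ ^ n / n !) =
        ‖w‖ ^ (n + 2) / (2 * n !) := by
      have hfn : (0:ℝ) < (n ! : ℝ) := by exact_mod_cast Nat.factorial_pos n
      field_simp
      ring
    rw [hrhs]
    have hfac : (2 : ℝ) * n ! ≤ ((n + 2)! : ℝ) := by
      have : 2 * n ! ≤ (n + 2)! := by
        calc 2 * n ! ≤ ((n + 1) * (n + 2)) * n ! := by
              apply Nat.mul_le_mul_right
              nlinarith
          _ = (n + 2)! := by
              rw [Nat.factorial_succ, Nat.factorial_succ]; ring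
      exact_mod_cast this
    gcongr
  have hexpR : Real.exp ‖w‖ = ∑' n : ℕ, ‖w‖ ^ n / n ! := by
    rw [Real.exp_eq_exp_ℝ, NormedSpace.exp_eq_tsum_div]
  calc ‖∑' n : ℕ, w ^ (n + 2) / (n + 2)!‖
      ≤ ∑' n : ℕ, ‖w ^ (n + 2) / (n + 2)!‖ := by
        simpa using norm_tsum_le_tsum_norm (f := fun n : ℕ => w ^ (n + 2) / (n + 2)!)
          (by simpa using hsum2.norm)
    _ ≤ ∑' n : ℕ, ‖w‖ ^ 2 / 2 * (‖w‖ ^ n / n !) := by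
        apply Summable.tsum_le_tsum habs
        · simpa using hsum2.norm
        · exact (NormedSpace.expSeries_div_summable (‖w‖)).mul_left _
    _ = ‖w‖ ^ 2 / 2 * Real.exp ‖w‖ := by
        rw [tsum_mul_left, hexpR]

/-- Taylor remainder bound for `f(z) = β exp(z) + z²` at a zero `λ̂`:
`|f(λ̂ + w) - λ̂(2 - λ̂)w| ≤ (1 + (|λ̂|²/2) exp|w|) |w|²`. -/
theorem stmt_17 (β lamh w : ℂ) (hzero : β * Complex.exp lamh + lamh ^ 2 = 0) :
    ‖β * Complex.exp (lamh + w) + (lamh + w) ^ 2 - lamh * (2 - lamh) * w‖ ≤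
      (1 + ‖lamh‖ ^ 2 / 2 * Real.exp ‖w‖) * ‖w‖ ^ 2 := by
  have key : β * Complex.exp (lamh + w) + (lamh + w) ^ 2 - lamh * (2 - lamh) * w
      = w ^ 2 - lamh ^ 2 * (Complex.exp w - 1 - w) := by
    rw [Complex.exp_add]
    linear_combination Complex.exp w * hzero
  rw [key]
  calc ‖w ^ 2 - lamh ^ 2 * (Complex.exp w - 1 - w)‖
      ≤ ‖w‖ ^ 2 + ‖lamh‖ ^ 2 * ‖Complex.exp w - 1 - w‖ := by
        have h := norm_sub_le (w ^ 2) (lamh ^ 2 * (Complex.exp w - 1 - w))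
        simp only [norm_mul, norm_pow] at h
        exact h
    _ ≤ ‖w‖ ^ 2 + ‖lamh‖ ^ 2 *
          (‖w‖ ^ 2 / 2 * Real.exp ‖w‖) := by
        gcongr
        exact exp_taylor2_bound w
    _ = (1 + ‖lamh‖ ^ 2 / 2 * Real.exp ‖w‖) * ‖w‖ ^ 2 := by
        ring
end
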